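/- arXiv:1908.09030 — 2 statements merged into one kernel-verified Lean document; each statement's English description precedes it below -/
import Mathlib

section
/- Let H = (E, (X_1, …, X_n)) be a multi-hypergraph and t_1, …, t_n integers with 0 ≤ t_i ≤ |X_i|, and let ρ be the polymatroid on E given by ρ(A) = Σ_{i=1}^n min(|A ∩ X_i|, t_i). Given a proper k-coloring c of the line graph G_H, for each i ∈ {1,…,k} the hyperedges X_h with c(h) = i are pairwise disjoint, and one may define the matroid N_i on E as the direct sum of the uniform matroids U_{t_h, X_h} over all h with c(h) = i together with a rank-zero matroid on the remaining elements; explicitly r_{N_i}(A) = Σ_{h : c(h)=i} min(|A ∩ X_h|, t_h). Then (N_1,…,N_k) ∈ Δ_ρ^k; hence if G_H has a proper k-coloring then ρ is k-decomposable. If moreover the sets X_1,…,X_n are distinct and for each i either t_i = 1 or 0 < t_i < |X_i|, then the map c ↦ (N_1,…,N_k) is injective. -/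
variable {α : Type*}

/-- `ρ` is an (integer) polymatroid on ground set `E`. -/
def IsPolymatroidOn [DecidableEq α] (E : Finset α) (ρ : Finset α → ℤ) : Prop :=
  ρ ∅ = 0 ∧
  (∀ A B : Finset α, A ⊆ B → B ⊆ E → ρ A ≤ ρ B) ∧
  (∀ A B : Finset α, A ⊆ E → B ⊆ E → ρ (A ∪ B) + ρ (A ∩ B) ≤ ρ A + ρ B)

/-- `r` is the rank function of a matroid on `E` (matroids are exactly the
`1`-polymatroids). -/
def IsMatroidRankOn [DecidableEq α] (E : Finset α) (r : Finset α → ℤ) : Prop :=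
  IsPolymatroidOn E r ∧ ∀ e ∈ E, r {e} ≤ 1

/-- `ρ` is a sum of `k` matroid rank functions on `E`. -/
def KDecomposable [DecidableEq α] (k : ℕ) (E : Finset α) (ρ : Finset α → ℤ) : Prop :=
  ∃ M : Fin k → Finset α → ℤ,
    (∀ i, IsMatroidRankOn E (M i)) ∧ ∀ X ⊆ E, ρ X = ∑ i, M i X

/-- The line graph of the multi-hypergraph with hyperedges `X 0, …, X (n-1)`. -/
def lineGraph [DecidableEq α] {n : ℕ} (X : Fin n → Finset α) : SimpleGraph (Fin n) where
  Adj i j := i ≠ j ∧ (X i ∩ X j).Nonempty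
  symm := by
    constructor
    rintro i j ⟨hij, hne⟩
    exact ⟨hij.symm, by rwa [Finset.inter_comm]⟩
  loopless := by constructor; rintro i ⟨h, -⟩; exact h rfl

/-- A proper `k`-coloring of a graph. -/
def ProperColoring {V : Type*} (G : SimpleGraph V) {k : ℕ} (c : V → Fin k) : Prop :=
  ∀ u v, G.Adj u v → c u ≠ c v

/-- The polymatroid `ρ(A) = Σ_i min(|A ∩ X_i|, t_i)`. -/
def hypRho [DecidableEq α] {n : ℕ} (X : Fin n → Finset α) (t : Fin n → ℤ) :
    Finset α → ℤ :=
  fun A => ∑ i, min (((A ∩ X i).card : ℤ)) (t i)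

/-- The rank function of the matroid `N_i` built from a coloring `c`: the direct
sum of the uniform matroids `U_{t_h, X_h}` over hyperedges of color `i`, together
with a rank-zero matroid on the remaining elements; explicitly
`r_{N_i}(A) = Σ_{h : c h = i} min(|A ∩ X_h|, t_h)`. -/
def hypN [DecidableEq α] {n k : ℕ} (X : Fin n → Finset α) (t : Fin n → ℤ)
    (c : Fin n → Fin k) (i : Fin k) : Finset α → ℤ :=
  fun A => ∑ h ∈ Finset.univ.filter (fun h => c h = i),
    min (((A ∩ X h).card : ℤ)) (t h)

section MyAux
variable {α : Type*} [DecidableEq α]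

lemma aux_term_nonneg (A Y : Finset α) {t : ℤ} (ht : 0 ≤ t) :
    0 ≤ min (((A ∩ Y).card : ℤ)) t :=
  le_min (by positivity) ht

lemma aux_term_empty (Y : Finset α) {t : ℤ} (ht : 0 ≤ t) :
    min ((((∅ : Finset α) ∩ Y).card : ℤ)) t = 0 := by
  simp [ht]

lemma aux_term_mono {A B : Finset α} (Y : Finset α) (t : ℤ) (hAB : A ⊆ B) :
    min (((A ∩ Y).card : ℤ)) t ≤ min (((B ∩ Y).card : ℤ)) t := by
  have : (A ∩ Y).card ≤ (B ∩ Y).card :=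
    Finset.card_le_card (Finset.inter_subset_inter hAB (Finset.Subset.refl Y))
  omega

lemma aux_term_submod (A B Y : Finset α) {t : ℤ} (ht : 0 ≤ t) :
    min ((((A ∪ B) ∩ Y).card : ℤ)) t + min ((((A ∩ B) ∩ Y).card : ℤ)) t ≤
      min (((A ∩ Y).card : ℤ)) t + min (((B ∩ Y).card : ℤ)) t := by
  have hcard : ((A ∪ B) ∩ Y).card + ((A ∩ B) ∩ Y).card = (A ∩ Y).card + (B ∩ Y).card := by
    rw [Finset.union_inter_distrib_right, Finset.inter_inter_distrib_right]
    exact Finset.card_union_add_card_inter _ _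
  have h2 : ((A ∩ B) ∩ Y).card ≤ (A ∩ Y).card :=
    Finset.card_le_card (Finset.inter_subset_inter Finset.inter_subset_left (Finset.Subset.refl Y))
  have h3 : ((A ∩ B) ∩ Y).card ≤ (B ∩ Y).card :=
    Finset.card_le_card (Finset.inter_subset_inter Finset.inter_subset_right (Finset.Subset.refl Y))
  omega

lemma hypN_isMatroid {n k : ℕ} (E : Finset α) (X : Fin n → Finset α)
    (hXsub : ∀ i, X i ⊆ E)
    (t : Fin n → ℤ) (ht0 : ∀ i, 0 ≤ t i) (c : Fin n → Fin k)
    (hdisj : ∀ h h' : Fin n, h ≠ h' → c h = c h' → Disjoint (X h) (X h'))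
    (i : Fin k) : IsMatroidRankOn E (hypN X t c i) := by
  constructor
  · refine ⟨?_, ?_, ?_⟩
    · exact Finset.sum_eq_zero fun h _ => aux_term_empty _ (ht0 h)
    · intro A B hAB _
      exact Finset.sum_le_sum fun h _ => aux_term_mono _ _ hAB
    · intro A B _ _
      show (∑ h ∈ _, _) + (∑ h ∈ _, _) ≤ (∑ h ∈ _, _) + (∑ h ∈ _, _)
      rw [← Finset.sum_add_distrib, ← Finset.sum_add_distrib]
      exact Finset.sum_le_sum fun h _ => aux_term_submod _ _ _ (ht0 h)
  · intro e _
    show (∑ h ∈ Finset.univ.filter (fun h => c h = i),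
        min ((({e} ∩ X h).card : ℤ)) (t h)) ≤ 1
    calc ∑ h ∈ Finset.univ.filter (fun h => c h = i), min ((({e} ∩ X h).card : ℤ)) (t h)
        ≤ ∑ h ∈ Finset.univ.filter (fun h => c h = i), (if e ∈ X h then (1:ℤ) else 0) := by
          refine Finset.sum_le_sum fun h _ => ?_
          by_cases he : e ∈ X h
          · simp only [he, if_true, Finset.singleton_inter_of_mem he]
            simpa using min_le_left ((({e} : Finset α).card : ℤ)) (t h)
          · simp only [he, if_false, Finset.singleton_inter_of_notMem he]
            simpa using min_le_left ((0:ℤ)) (t h)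
      _ = (((Finset.univ.filter (fun h => c h = i)).filter (fun h => e ∈ X h)).card : ℤ) :=
          Finset.sum_boole _ _
      _ ≤ 1 := by
          have hcard : ((Finset.univ.filter (fun h => c h = i)).filter
              (fun h => e ∈ X h)).card ≤ 1 := by
            refine Finset.card_le_one.mpr fun a ha b hb => ?_
            simp only [Finset.mem_filter] at ha hb
            by_contra hab
            exact (Finset.disjoint_left.mp
              (hdisj a b hab (ha.1.2.trans hb.1.2.symm))) ha.2 hb.2
          exact_mod_cast hcard

lemma hypN_eval {n k : ℕ} (X : Fin n → Finset α) (t : Fin n → ℤ)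
    (ht0 : ∀ i, 0 ≤ t i) (c : Fin n → Fin k)
    (hdisj : ∀ h h' : Fin n, h ≠ h' → c h = c h' → Disjoint (X h) (X h'))
    (h : Fin n) {A : Finset α} (hA : A ⊆ X h) :
    hypN X t c (c h) A = min ((A.card : ℤ)) (t h) := by
  show (∑ g ∈ Finset.univ.filter (fun g => c g = c h),
      min (((A ∩ X g).card : ℤ)) (t g)) = _
  have hmem : h ∈ Finset.univ.filter (fun g => c g = c h) := by simp
  rw [← Finset.add_sum_erase _ _ hmem]
  have h1 : A ∩ X h = A := Finset.inter_eq_left.mpr hA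
  have h2 : ∑ g ∈ (Finset.univ.filter (fun g => c g = c h)).erase h,
      min (((A ∩ X g).card : ℤ)) (t g) = 0 := by
    refine Finset.sum_eq_zero fun g hg => ?_
    obtain ⟨hgne, hgf⟩ := Finset.mem_erase.mp hg
    have hd : Disjoint (X g) (X h) := hdisj g h hgne (Finset.mem_filter.mp hgf).2
    have hempty : A ∩ X g = ∅ := by
      rw [Finset.eq_empty_iff_forall_notMem]
      intro x hx
      obtain ⟨hxA, hxg⟩ := Finset.mem_inter.mp hx
      exact (Finset.disjoint_left.mp hd) hxg (hA hxA)
    rw [hempty]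
    simp [ht0 g]
  rw [h1, h2, add_zero]

lemma hypN_sdiff {n k : ℕ} (X : Fin n → Finset α) (t : Fin n → ℤ)
    (ht0 : ∀ i, 0 ≤ t i) (c' : Fin n → Fin k)
    (hdisj : ∀ h h' : Fin n, h ≠ h' → c' h = c' h' → Disjoint (X h) (X h'))
    (i : Fin k) (g : Fin n) (hg : c' g = i) (A : Finset α) :
    hypN X t c' i (A \ X g) = hypN X t c' i A - min (((A ∩ X g).card : ℤ)) (t g) := by
  show (∑ f ∈ Finset.univ.filter (fun f => c' f = i),
      min ((((A \ X g) ∩ X f).card : ℤ)) (t f)) =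
    (∑ f ∈ Finset.univ.filter (fun f => c' f = i),
      min (((A ∩ X f).card : ℤ)) (t f)) - min (((A ∩ X g).card : ℤ)) (t g)
  have hmem : g ∈ Finset.univ.filter (fun f => c' f = i) := by simp [hg]
  rw [← Finset.add_sum_erase _ (fun f => min ((((A \ X g) ∩ X f).card : ℤ)) (t f)) hmem,
      ← Finset.add_sum_erase _ (fun f => min (((A ∩ X f).card : ℤ)) (t f)) hmem]
  have h1 : (A \ X g) ∩ X g = ∅ := by
    rw [Finset.eq_empty_iff_forall_notMem]
    intro x hx
    obtain ⟨hx1, hx2⟩ := Finset.mem_inter.mp hx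
    exact (Finset.mem_sdiff.mp hx1).2 hx2
  have h2 : ∀ f ∈ (Finset.univ.filter (fun f => c' f = i)).erase g,
      (A \ X g) ∩ X f = A ∩ X f := by
    intro f hf
    obtain ⟨hfne, hff⟩ := Finset.mem_erase.mp hf
    have hd : Disjoint (X f) (X g) :=
      hdisj f g hfne (by rw [(Finset.mem_filter.mp hff).2, hg])
    apply Finset.Subset.antisymm
    · exact Finset.inter_subset_inter Finset.sdiff_subset (Finset.Subset.refl _)
    · intro x hx
      obtain ⟨hxA, hxf⟩ := Finset.mem_inter.mp hx
      exact Finset.mem_inter.mpr ⟨Finset.mem_sdiff.mpr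
        ⟨hxA, fun hxg => (Finset.disjoint_left.mp hd) hxf hxg⟩, hxf⟩
  rw [h1, Finset.sum_congr rfl (fun f hf => by rw [h2 f hf])]
  have h3 : min (((∅ : Finset α).card : ℤ)) (t g) = 0 := by simp [ht0 g]
  rw [h3]
  ring

lemma hyp_key {n k : ℕ} (X : Fin n → Finset α) (hXne : ∀ i, (X i).Nonempty)
    (t : Fin n → ℤ) (ht1 : ∀ i, 1 ≤ t i) (ht2 : ∀ i, t i = 1 ∨ t i < ((X i).card : ℤ))
    (c' : Fin n → Fin k)
    (hdisj : ∀ h h' : Fin n, h ≠ h' → c' h = c' h' → Disjoint (X h) (X h'))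
    (i : Fin k) (h : Fin n) (hth : t h ≤ ((X h).card : ℤ))
    (heq : ∀ A ⊆ X h, min ((A.card : ℤ)) (t h) = hypN X t c' i A) :
    ∃ g, c' g = i ∧ X h ⊆ X g := by
  have ht0 : ∀ j, 0 ≤ t j := fun j => le_trans zero_le_one (ht1 j)
  have hNdef : ∀ A : Finset α, hypN X t c' i A =
      ∑ f ∈ Finset.univ.filter (fun f => c' f = i), min (((A ∩ X f).card : ℤ)) (t f) :=
    fun A => rfl
  have hcover : ∀ e ∈ X h, ∃ g, c' g = i ∧ e ∈ X g := by
    intro e he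
    by_contra hcon
    push_neg at hcon
    have h1 := heq {e} (Finset.singleton_subset_iff.mpr he)
    have h0 : hypN X t c' i {e} = 0 := by
      rw [hNdef]
      refine Finset.sum_eq_zero fun g hg => ?_
      have hg' : c' g = i := (Finset.mem_filter.mp hg).2
      rw [Finset.singleton_inter_of_notMem (hcon g hg')]
      simp [ht0 g]
    rw [h0, Finset.card_singleton] at h1
    have := ht1 h
    omega
  obtain ⟨e, he⟩ := hXne h
  obtain ⟨g, hgc, hge⟩ := hcover e he
  refine ⟨g, hgc, fun e' he' => ?_⟩
  by_contra he'g
  obtain ⟨g', hg'c, hg'e⟩ := hcover e' he'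
  have hgg' : g' ≠ g := fun hq => he'g (hq ▸ hg'e)
  have hdgg : Disjoint (X g') (X g) := hdisj g' g hgg' (by rw [hg'c, hgc])
  have hee' : e ≠ e' := fun hq => he'g (hq ▸ hge)
  rcases ht2 h with hth1 | hth2
  · -- t h = 1 : pair argument
    have hpair : ({e, e'} : Finset α) ⊆ X h := by
      intro x hx
      rcases Finset.mem_insert.mp hx with h' | h'
      · exact h' ▸ he
      · exact (Finset.mem_singleton.mp h') ▸ he'
    have h1 := heq {e, e'} hpair
    have hcard2 : ({e, e'} : Finset α).card = 2 := by
      rw [Finset.card_insert_of_notMem (by simp [hee']), Finset.card_singleton]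
    rw [hcard2, hNdef] at h1
    have hsub : ({g, g'} : Finset (Fin n)) ⊆ Finset.univ.filter (fun f => c' f = i) := by
      intro x hx
      simp only [Finset.mem_insert, Finset.mem_singleton] at hx
      rcases hx with rfl | rfl <;> simp [hgc, hg'c]
    have hle : (∑ f ∈ ({g, g'} : Finset (Fin n)), min ((( {e,e'} ∩ X f).card : ℤ)) (t f))
        ≤ ∑ f ∈ Finset.univ.filter (fun f => c' f = i),
            min ((( {e,e'} ∩ X f).card : ℤ)) (t f) :=
      Finset.sum_le_sum_of_subset_of_nonneg hsub (fun f _ _ => aux_term_nonneg _ _ (ht0 f))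
    rw [Finset.sum_pair (Ne.symm hgg')] at hle
    have hb1 : 1 ≤ min ((( {e,e'} ∩ X g).card : ℤ)) (t g) := by
      have hm : e ∈ ({e, e'} : Finset α) ∩ X g :=
        Finset.mem_inter.mpr ⟨Finset.mem_insert_self _ _, hge⟩
      have hcpos := Finset.card_pos.mpr ⟨e, hm⟩
      have := ht1 g
      omega
    have hb2 : 1 ≤ min ((( {e,e'} ∩ X g').card : ℤ)) (t g') := by
      have hm : e' ∈ ({e, e'} : Finset α) ∩ X g' :=
        Finset.mem_inter.mpr ⟨by simp, hg'e⟩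
      have hcpos := Finset.card_pos.mpr ⟨e', hm⟩
      have := ht1 g'
      omega
    rw [← h1] at hle
    omega
  · -- t h < |X h| : removal argument
    have E0 := heq (X h) (Finset.Subset.refl _)
    have E1 := heq (X h \ X g) Finset.sdiff_subset
    have E2 := heq (X h \ X g') Finset.sdiff_subset
    have E3 := heq ((X h \ X g) \ X g')
      (Finset.Subset.trans Finset.sdiff_subset Finset.sdiff_subset)
    have E1s := hypN_sdiff X t ht0 c' hdisj i g hgc (X h)
    have E2s := hypN_sdiff X t ht0 c' hdisj i g' hg'c (X h)
    have E3s := hypN_sdiff X t ht0 c' hdisj i g' hg'c (X h \ X g)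
    have hBg : (X h \ X g) ∩ X g' = X h ∩ X g' := by
      apply Finset.Subset.antisymm
      · exact Finset.inter_subset_inter Finset.sdiff_subset (Finset.Subset.refl _)
      · intro x hx
        obtain ⟨hxA, hxf⟩ := Finset.mem_inter.mp hx
        exact Finset.mem_inter.mpr ⟨Finset.mem_sdiff.mpr
          ⟨hxA, fun hxg => (Finset.disjoint_left.mp hdgg) hxf hxg⟩, hxf⟩
    rw [hBg] at E3s
    rw [← E0] at E1s E2s
    rw [← E1] at E3s
    rw [← E1] at E1s
    rw [← E2] at E2s
    rw [← E3] at E3s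
    have c1 : (X h ∩ X g).card + (X h \ X g).card = (X h).card :=
      Finset.card_inter_add_card_sdiff _ _
    have c2 : (X h ∩ X g').card + (X h \ X g').card = (X h).card :=
      Finset.card_inter_add_card_sdiff _ _
    have c3 : ((X h \ X g) ∩ X g').card + ((X h \ X g) \ X g').card = (X h \ X g).card :=
      Finset.card_inter_add_card_sdiff _ _
    rw [hBg] at c3
    have hq1 : 0 < (X h ∩ X g).card :=
      Finset.card_pos.mpr ⟨e, Finset.mem_inter.mpr ⟨he, hge⟩⟩
    have hp1 : 0 < (X h ∩ X g').card :=
      Finset.card_pos.mpr ⟨e', Finset.mem_inter.mpr ⟨he', hg'e⟩⟩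
    have htg := ht1 g
    have htg' := ht1 g'
    have hth' := ht1 h
    omega

end MyAux

theorem stmt3 [DecidableEq α] {n k : ℕ} (E : Finset α)
    (X : Fin n → Finset α)
    (hXsub : ∀ i, X i ⊆ E) (hXne : ∀ i, (X i).Nonempty)
    (t : Fin n → ℤ) (ht : ∀ i, 0 ≤ t i ∧ t i ≤ ((X i).card : ℤ))
    (hk : 0 < k)
    (c : Fin n → Fin k) (hc : ProperColoring (lineGraph X) c) :
    (∀ h h' : Fin n, h ≠ h' → c h = c h' → Disjoint (X h) (X h')) ∧
    (∀ i : Fin k, IsMatroidRankOn E (hypN X t c i)) ∧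
    (∀ A ⊆ E, hypRho X t A = ∑ i, hypN X t c i A) ∧
    KDecomposable k E (hypRho X t) ∧
    (Function.Injective X →
      (∀ i, t i = 1 ∨ (0 < t i ∧ t i < ((X i).card : ℤ))) →
      ∀ c' : Fin n → Fin k, ProperColoring (lineGraph X) c' →
        (∀ i : Fin k, hypN X t c i = hypN X t c' i) → c = c') := by
  have hdisj : ∀ h h' : Fin n, h ≠ h' → c h = c h' → Disjoint (X h) (X h') := by
    intro h h' hne hcc
    by_contra hd
    rw [Finset.not_disjoint_iff] at hd
    obtain ⟨a, ha1, ha2⟩ := hd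
    exact hc h h' ⟨hne, ⟨a, Finset.mem_inter.mpr ⟨ha1, ha2⟩⟩⟩ hcc
  have ht0 : ∀ i, 0 ≤ t i := fun i => (ht i).1
  have hmat : ∀ i, IsMatroidRankOn E (hypN X t c i) :=
    fun i => hypN_isMatroid E X hXsub t ht0 c hdisj i
  have hsum : ∀ A : Finset α, hypRho X t A = ∑ i, hypN X t c i A := by
    intro A
    exact (Finset.sum_fiberwise _ _ _).symm
  refine ⟨hdisj, hmat, fun A _ => hsum A, ⟨hypN X t c, hmat, fun A _ => hsum A⟩, ?_⟩
  intro hXinj htt c' hc' hNN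
  have hdisj' : ∀ h h' : Fin n, h ≠ h' → c' h = c' h' → Disjoint (X h) (X h') := by
    intro h h' hne hcc
    by_contra hd
    rw [Finset.not_disjoint_iff] at hd
    obtain ⟨a, ha1, ha2⟩ := hd
    exact hc' h h' ⟨hne, ⟨a, Finset.mem_inter.mpr ⟨ha1, ha2⟩⟩⟩ hcc
  have ht1 : ∀ i, 1 ≤ t i := by
    intro i
    rcases htt i with h1 | ⟨h1, _⟩ <;> omega
  have ht2 : ∀ i, t i = 1 ∨ t i < ((X i).card : ℤ) := by
    intro i
    rcases htt i with h1 | ⟨_, h2⟩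
    · exact Or.inl h1
    · exact Or.inr h2
  funext h
  have heq1 : ∀ A ⊆ X h, min ((A.card : ℤ)) (t h) = hypN X t c' (c h) A := by
    intro A hA
    rw [← hNN (c h)]
    exact (hypN_eval X t ht0 c hdisj h hA).symm
  obtain ⟨g, hgc, hhg⟩ := hyp_key X hXne t ht1 ht2 c' hdisj' (c h) h (ht h).2 heq1
  have heq2 : ∀ A ⊆ X g, min ((A.card : ℤ)) (t g) = hypN X t c (c h) A := by
    intro A hA
    rw [hNN (c h)]
    have hev := hypN_eval X t ht0 c' hdisj' g hA
    rw [hgc] at hev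
    exact hev.symm
  obtain ⟨f, hfc, hgf⟩ := hyp_key X hXne t ht1 ht2 c hdisj (c h) g (ht g).2 heq2
  have hf : f = h := by
    by_contra hfh
    have hd := hdisj f h hfh hfc
    obtain ⟨x, hx⟩ := hXne h
    exact (Finset.disjoint_left.mp hd) (hgf (hhg hx)) hx
  have hXgh : X g = X h := Finset.Subset.antisymm (hf ▸ hgf) hhg
  have hgh : g = h := hXinj hXgh
  subst hgh
  exact hgc.symm
end

section
/- Let H = (E, {X_1, …, X_n}) be a hypergraph satisfying properties (H2) and (H3), and let ρ be the polymatroid on E given by ρ(A) = Σ_{i=1}^n min(|A ∩ X_i|, 1), i.e., all t_i equal 1. Fix an integer s with max{ρ(A) : A ⊆ E, |A| ≤ 4} ≤ s < ρ(E). If the truncation T(ρ, s) is k-decomposable, then there is a proper k-coloring c of the line graph G_H with s ≥ c_1 + 2·c_2^+, where c_1 (respectively c_2^+) is the number of colors whose color class under c has size exactly 1 (respectively at least 2). In particular, if s < χ(G_H), then T(ρ, s) is not k-decomposable for any k. -/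
variable {α : Type*}

/-- The polymatroid `ρ(A) = Σ_i min(|A ∩ X_i|, 1)` (all `t_i = 1`). -/
def hypRho1 [DecidableEq α] {n : ℕ} (X : Fin n → Finset α) : Finset α → ℤ :=
  fun A => ∑ i, min (((A ∩ X i).card : ℤ)) 1

/-- `c₁`: the number of colors whose color class has size exactly 1. -/
def colorCount1 {V : Type*} [Fintype V] [DecidableEq V] {k : ℕ} (c : V → Fin k) : ℕ :=
  (Finset.univ.filter fun i : Fin k => (Finset.univ.filter fun v => c v = i).card = 1).card

/-- `c₂⁺`: the number of colors whose color class has size at least 2. -/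
def colorCount2 {V : Type*} [Fintype V] [DecidableEq V] {k : ℕ} (c : V → Fin k) : ℕ :=
  (Finset.univ.filter fun i : Fin k => 2 ≤ (Finset.univ.filter fun v => c v = i).card).card

section Aux
variable [DecidableEq α] {E : Finset α} {r : Finset α → ℤ}

lemma mr_mono (h : IsMatroidRankOn E r) {A B : Finset α} (hAB : A ⊆ B) (hB : B ⊆ E) :
    r A ≤ r B := h.1.2.1 A B hAB hB

lemma mr_nonneg (h : IsMatroidRankOn E r) {A : Finset α} (hA : A ⊆ E) : 0 ≤ r A := by
  have := h.1.2.1 ∅ A (Finset.empty_subset A) hA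
  rw [h.1.1] at this; exact this

lemma mr_submod (h : IsMatroidRankOn E r) {A B : Finset α} (hA : A ⊆ E) (hB : B ⊆ E) :
    r (A ∪ B) + r (A ∩ B) ≤ r A + r B := h.1.2.2 A B hA hB

lemma mr_single_le (h : IsMatroidRankOn E r) {a : α} (ha : a ∈ E) : r {a} ≤ 1 := h.2 a ha

lemma mr_single_nonneg (h : IsMatroidRankOn E r) {a : α} (ha : a ∈ E) : 0 ≤ r {a} :=
  mr_nonneg h (Finset.singleton_subset_iff.mpr ha)

lemma mr_union_le (h : IsMatroidRankOn E r) {A B : Finset α} (hA : A ⊆ E) (hB : B ⊆ E) :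
    r (A ∪ B) ≤ r A + r B := by
  have h1 := mr_submod h hA hB
  have h2 : 0 ≤ r (A ∩ B) := mr_nonneg h ((Finset.inter_subset_left).trans hA)
  linarith

lemma mr_le_add_sum (h : IsMatroidRankOn E r) {A : Finset α} (hA : A ⊆ E) :
    ∀ C : Finset α, C ⊆ E → r (A ∪ C) ≤ r A + ∑ v ∈ C, r {v} := by
  intro C
  induction C using Finset.induction_on with
  | empty => intro _; simp
  | insert _ _ hnotmem =>
    rename_i a C ih
    intro hC
    have haE : ({a} : Finset α) ⊆ E := by
      simpa using hC (Finset.mem_insert_self a C)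
    have hCE : C ⊆ E := fun x hx => hC (Finset.mem_insert_of_mem hx)
    have h1 : A ∪ insert a C = (A ∪ C) ∪ {a} := by
      ext x; simp [Finset.mem_insert]
    have h2 : r ((A ∪ C) ∪ {a}) ≤ r (A ∪ C) + r {a} :=
      mr_union_le h (Finset.union_subset hA hCE) haE
    have h3 := ih hCE
    rw [Finset.sum_insert hnotmem, h1]
    linarith

/-- Deficiency of a set. -/
def matDef (r : Finset α → ℤ) (A : Finset α) : ℤ := (∑ v ∈ A, r {v}) - r A

lemma matDef_nonneg (h : IsMatroidRankOn E r) {A : Finset α} (hA : A ⊆ E) :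
    0 ≤ matDef r A := by
  have := mr_le_add_sum h (Finset.empty_subset E) A hA
  rw [Finset.empty_union, h.1.1] at this
  unfold matDef; linarith

lemma matDef_mono (h : IsMatroidRankOn E r) {A B : Finset α} (hAB : A ⊆ B) (hB : B ⊆ E) :
    matDef r A ≤ matDef r B := by
  have h1 : r (A ∪ (B \ A)) ≤ r A + ∑ v ∈ B \ A, r {v} :=
    mr_le_add_sum h (hAB.trans hB) (B \ A) ((Finset.sdiff_subset).trans hB)
  rw [Finset.union_sdiff_of_subset hAB] at h1
  have h2 : (∑ v ∈ B \ A, r {v}) + ∑ v ∈ A, r {v} = ∑ v ∈ B, r {v} :=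
    Finset.sum_sdiff hAB
  unfold matDef; linarith

lemma pair_subset {a b : α} {S : Finset α} (ha : a ∈ S) (hb : b ∈ S) :
    ({a, b} : Finset α) ⊆ S := by
  simp [Finset.insert_subset_iff, ha, hb]

lemma triple_subset {a b c : α} {S : Finset α} (ha : a ∈ S) (hb : b ∈ S) (hc : c ∈ S) :
    ({a, b, c} : Finset α) ⊆ S := by
  simp [Finset.insert_subset_iff, ha, hb, hc]

lemma quad_subset {a b c d : α} {S : Finset α} (ha : a ∈ S) (hb : b ∈ S) (hc : c ∈ S)
    (hd : d ∈ S) : ({a, b, c, d} : Finset α) ⊆ S := by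
  simp [Finset.insert_subset_iff, ha, hb, hc, hd]

lemma sum_triple {γ : Type*} [DecidableEq γ] {β : Type*} [AddCommMonoid β] {a b c : γ} (f : γ → β)
    (hab : a ≠ b) (hac : a ≠ c) (hbc : b ≠ c) :
    ∑ v ∈ ({a, b, c} : Finset γ), f v = f a + f b + f c := by
  rw [Finset.sum_insert (by simp [hab, hac]), Finset.sum_insert (by simp [hbc]),
    Finset.sum_singleton, add_assoc]

lemma sum_quad {γ : Type*} [DecidableEq γ] {β : Type*} [AddCommMonoid β] {a b c d : γ} (f : γ → β)
    (hab : a ≠ b) (hac : a ≠ c) (had : a ≠ d) (hbc : b ≠ c) (hbd : b ≠ d) (hcd : c ≠ d) :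
    ∑ v ∈ ({a, b, c, d} : Finset γ), f v = f a + f b + f c + f d := by
  rw [Finset.sum_insert (by simp [hab, hac, had]), sum_triple f hbc hbd hcd]
  abel

lemma card_quad_le {a b c d : α} : ({a, b, c, d} : Finset α).card ≤ 4 := by
  have h1 := Finset.card_insert_le a ({b, c, d} : Finset α)
  have h2 := Finset.card_insert_le b ({c, d} : Finset α)
  have h3 := Finset.card_insert_le c ({d} : Finset α)
  have h4 : ({d} : Finset α).card = 1 := Finset.card_singleton d
  omega

lemma card_triple_le {a b c : α} : ({a, b, c} : Finset α).card ≤ 4 := by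
  have h1 := Finset.card_insert_le a ({b, c} : Finset α)
  have h2 := Finset.card_insert_le b ({c} : Finset α)
  have h3 : ({c} : Finset α).card = 1 := Finset.card_singleton c
  omega

lemma pair_union_pair {a b c : α} : ({a, b} : Finset α) ∪ {b, c} = {a, b, c} := by
  ext x
  simp only [Finset.mem_union, Finset.mem_insert, Finset.mem_singleton]
  tauto

lemma pair_inter_pair {a b c : α} (hab : a ≠ b) (hac : a ≠ c) :
    ({a, b} : Finset α) ∩ {b, c} = {b} := by
  ext x
  simp only [Finset.mem_inter, Finset.mem_insert, Finset.mem_singleton]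
  constructor
  · rintro ⟨rfl | rfl, h2⟩
    · rcases h2 with h2 | h2 <;> [exact absurd h2 hab; exact absurd h2 hac]
    · rfl
  · rintro rfl; tauto

lemma mr_deficit_pair (h : IsMatroidRankOn E r) {a b : α} (ha : a ∈ E) (hb : b ∈ E)
    (hab : a ≠ b) (hd : r {a, b} < r {a} + r {b}) :
    r {a} = 1 ∧ r {b} = 1 ∧ r {a, b} = 1 := by
  have hpE : ({a, b} : Finset α) ⊆ E := pair_subset ha hb
  have h1 : r {a} ≤ r {a, b} := mr_mono h (by simp [Finset.insert_subset_iff]) hpE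
  have h2 : r {b} ≤ r {a, b} := mr_mono h (by simp [Finset.insert_subset_iff]) hpE
  have := mr_single_le h ha; have := mr_single_le h hb
  have := mr_single_nonneg h ha; have := mr_single_nonneg h hb
  omega

lemma mr_parallel_trans (h : IsMatroidRankOn E r) {a b c : α} (ha : a ∈ E) (hb : b ∈ E)
    (hc : c ∈ E) (hab : a ≠ b) (hac : a ≠ c) (hbc : b ≠ c)
    (h1 : r {a} = 1) (h2 : r {b} = 1) (h3 : r {c} = 1)
    (hpab : r {a, b} = 1) (hpbc : r {b, c} = 1) :
    r {a, c} = 1 ∧ r {a, b, c} = 1 := by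
  have hsub := mr_submod h (A := {a, b}) (B := {b, c}) (pair_subset ha hb) (pair_subset hb hc)
  rw [pair_union_pair, pair_inter_pair hab hac] at hsub
  have htE : ({a, b, c} : Finset α) ⊆ E := triple_subset ha hb hc
  have hrb : 0 ≤ r {b} := mr_single_nonneg h hb
  have hbb : r {b} ≤ r {b, c} := mr_mono h (by simp [Finset.insert_subset_iff]) (pair_subset hb hc)
  have h4 : r {a, c} ≤ r {a, b, c} := mr_mono h (by intro x; simp; tauto) htE
  have h5 : r {a} ≤ r {a, c} := mr_mono h (by simp [Finset.insert_subset_iff]) (pair_subset ha hc)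
  have h6 : r {a} ≤ r {a, b, c} := mr_mono h (by simp [Finset.insert_subset_iff]) htE
  omega

lemma mr_U23 (h : IsMatroidRankOn E r) {a b c : α} (ha : a ∈ E) (hb : b ∈ E) (hc : c ∈ E)
    (hab : a ≠ b) (hac : a ≠ c) (hbc : b ≠ c)
    (hpab : r {a, b} = r {a} + r {b}) (hpac : r {a, c} = r {a} + r {c})
    (hpbc : r {b, c} = r {b} + r {c}) (hD : matDef r {a, b, c} = 1) :
    (r {a} = 1 ∧ r {b} = 1 ∧ r {c} = 1) ∧
      r {a, b, c} = 2 ∧ r {a, b} = 2 ∧ r {a, c} = 2 ∧ r {b, c} = 2 := by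
  have htE : ({a, b, c} : Finset α) ⊆ E := triple_subset ha hb hc
  unfold matDef at hD
  rw [sum_triple _ hab hac hbc] at hD
  have m1 : r {a, b} ≤ r {a, b, c} := mr_mono h (by intro x; simp; tauto) htE
  have m2 : r {a, c} ≤ r {a, b, c} := mr_mono h (by intro x; simp; tauto) htE
  have m3 : r {b, c} ≤ r {a, b, c} := mr_mono h (by intro x; simp; tauto) htE
  have := mr_single_le h ha; have := mr_single_le h hb; have := mr_single_le h hc
  have := mr_single_nonneg h ha; have := mr_single_nonneg h hb; have := mr_single_nonneg h hc
  omega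

lemma mr_quadcontra (h : IsMatroidRankOn E r) {y z1 z2 w : α}
    (hy : y ∈ E) (hz1 : z1 ∈ E) (hz2 : z2 ∈ E) (hw : w ∈ E)
    (hyz1 : y ≠ z1) (hyz2 : y ≠ z2) (hyw : y ≠ w) (hz12 : z1 ≠ z2) (hz1w : z1 ≠ w)
    (hz2w : z2 ≠ w)
    (h1 : r {y, z1, w} ≤ 2) (h2 : r {y, z2, w} ≤ 2) (h3 : 2 ≤ r {y, w})
    (h4 : 3 ≤ r {y, z1, z2}) : False := by
  have hsub := mr_submod h (A := {y, z1, w}) (B := {y, z2, w})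
    (triple_subset hy hz1 hw) (triple_subset hy hz2 hw)
  have hu : ({y, z1, w} : Finset α) ∪ {y, z2, w} = {y, z1, z2, w} := by
    ext x; simp; tauto
  have hi : ({y, z1, w} : Finset α) ∩ {y, z2, w} = {y, w} := by
    ext x
    simp only [Finset.mem_inter, Finset.mem_insert, Finset.mem_singleton]
    constructor
    · rintro ⟨rfl | rfl | rfl, h'⟩
      · tauto
      · rcases h' with h' | h' | h' <;> simp_all
      · tauto
    · rintro (rfl | rfl) <;> tauto
  rw [hu, hi] at hsub
  have hm : r {y, z1, z2} ≤ r {y, z1, z2, w} :=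
    mr_mono h (by intro x; simp; tauto) (quad_subset hy hz1 hz2 hw)
  omega

end Aux

section Aux2
variable [DecidableEq α] {n : ℕ} {X : Fin n → Finset α}

lemma card_triple {a b c : α} (hab : a ≠ b) (hac : a ≠ c) (hbc : b ≠ c) :
    ({a, b, c} : Finset α).card = 3 := by
  rw [Finset.card_insert_of_notMem (by simp [hab, hac]), Finset.card_pair hbc]

lemma sum_single_rho (A : Finset α) :
    (∑ v ∈ A, hypRho1 X {v}) = ∑ e, ((A ∩ X e).card : ℤ) := by
  unfold hypRho1
  rw [Finset.sum_comm]
  refine Finset.sum_congr rfl fun e _ => ?_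
  have hterm : ∀ v ∈ A, min ((({v} : Finset α) ∩ X e).card : ℤ) 1
      = if v ∈ X e then 1 else 0 := by
    intro v _
    by_cases hv : v ∈ X e
    · rw [Finset.singleton_inter_of_mem hv]; simp [hv]
    · rw [Finset.singleton_inter_of_notMem hv]; simp [hv]
  rw [Finset.sum_congr rfl hterm, Finset.sum_boole, Finset.filter_mem_eq_inter]

lemma matDef_rho_eq (A : Finset α) :
    matDef (hypRho1 X) A =
      ∑ e, (((A ∩ X e).card : ℤ) - min ((A ∩ X e).card : ℤ) 1) := by
  unfold matDef
  rw [sum_single_rho]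
  unfold hypRho1
  rw [← Finset.sum_sub_distrib]

lemma edge_unique (hH2 : ∀ i j, i ≠ j → (X i ∩ X j).card ≤ 1) {u v : α} {j e : Fin n}
    (huv : u ≠ v) (hu : u ∈ X j) (hv : v ∈ X j) (hu' : u ∈ X e) (hv' : v ∈ X e) :
    e = j := by
  by_contra hne
  have h1 := hH2 e j hne
  have h2 : ({u, v} : Finset α) ⊆ X e ∩ X j := by
    intro x hx
    simp only [Finset.mem_insert, Finset.mem_singleton] at hx
    rcases hx with rfl | rfl <;> simp [*]
  have h3 := Finset.card_le_card h2
  rw [Finset.card_pair huv] at h3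
  omega

lemma inter_card_le_one_pair {u v : α} {T : Finset α} (h : ¬(u ∈ T ∧ v ∈ T)) :
    (({u, v} : Finset α) ∩ T).card ≤ 1 := by
  by_cases hu : u ∈ T
  · have hv : v ∉ T := fun hv => h ⟨hu, hv⟩
    have hsub : ({u, v} : Finset α) ∩ T ⊆ {u} := by
      intro x hx
      simp only [Finset.mem_inter, Finset.mem_insert, Finset.mem_singleton] at hx ⊢
      rcases hx.1 with rfl | rfl
      · rfl
      · exact absurd hx.2 hv
    simpa using Finset.card_le_card hsub
  · have hsub : ({u, v} : Finset α) ∩ T ⊆ {v} := by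
      intro x hx
      simp only [Finset.mem_inter, Finset.mem_insert, Finset.mem_singleton] at hx ⊢
      rcases hx.1 with rfl | rfl
      · exact absurd hx.2 hu
      · rfl
    simpa using Finset.card_le_card hsub

lemma inter_card_le_one_triple {u v w : α} {T : Finset α}
    (h1 : ¬(u ∈ T ∧ v ∈ T)) (h2 : ¬(u ∈ T ∧ w ∈ T)) (h3 : ¬(v ∈ T ∧ w ∈ T)) :
    (({u, v, w} : Finset α) ∩ T).card ≤ 1 := by
  by_cases hu : u ∈ T
  · have hv : v ∉ T := fun hv => h1 ⟨hu, hv⟩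
    have hw : w ∉ T := fun hw => h2 ⟨hu, hw⟩
    have hsub : ({u, v, w} : Finset α) ∩ T ⊆ {u} := by
      intro x hx
      simp only [Finset.mem_inter, Finset.mem_insert, Finset.mem_singleton] at hx ⊢
      rcases hx.1 with rfl | rfl | rfl
      · rfl
      · exact absurd hx.2 hv
      · exact absurd hx.2 hw
    simpa using Finset.card_le_card hsub
  · have hsub : ({u, v, w} : Finset α) ∩ T ⊆ ({v, w} : Finset α) ∩ T := by
      intro x hx
      simp only [Finset.mem_inter, Finset.mem_insert, Finset.mem_singleton] at hx ⊢
      rcases hx.1 with rfl | rfl | rfl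
      · exact absurd hx.2 hu
      · exact ⟨Or.inl rfl, hx.2⟩
      · exact ⟨Or.inr rfl, hx.2⟩
    exact le_trans (Finset.card_le_card hsub) (inter_card_le_one_pair h3)

lemma inter_card_le_one_quad {p q u w : α} {T : Finset α}
    (h1 : ¬(p ∈ T ∧ q ∈ T)) (h2 : ¬(p ∈ T ∧ u ∈ T)) (h3 : ¬(p ∈ T ∧ w ∈ T))
    (h4 : ¬(q ∈ T ∧ u ∈ T)) (h5 : ¬(q ∈ T ∧ w ∈ T)) (h6 : ¬(u ∈ T ∧ w ∈ T)) :
    (({p, q, u, w} : Finset α) ∩ T).card ≤ 1 := by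
  by_cases hp : p ∈ T
  · have hq : q ∉ T := fun h => h1 ⟨hp, h⟩
    have hu : u ∉ T := fun h => h2 ⟨hp, h⟩
    have hw : w ∉ T := fun h => h3 ⟨hp, h⟩
    have hsub : ({p, q, u, w} : Finset α) ∩ T ⊆ {p} := by
      intro x hx
      simp only [Finset.mem_inter, Finset.mem_insert, Finset.mem_singleton] at hx ⊢
      rcases hx.1 with rfl | rfl | rfl | rfl
      · rfl
      · exact absurd hx.2 hq
      · exact absurd hx.2 hu
      · exact absurd hx.2 hw
    simpa using Finset.card_le_card hsub
  · have hsub : ({p, q, u, w} : Finset α) ∩ T ⊆ ({q, u, w} : Finset α) ∩ T := by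
      intro x hx
      simp only [Finset.mem_inter, Finset.mem_insert, Finset.mem_singleton] at hx ⊢
      rcases hx.1 with rfl | rfl | rfl | rfl
      · exact absurd hx.2 hp
      · exact ⟨Or.inl rfl, hx.2⟩
      · exact ⟨Or.inr (Or.inl rfl), hx.2⟩
      · exact ⟨Or.inr (Or.inr rfl), hx.2⟩
    exact le_trans (Finset.card_le_card hsub) (inter_card_le_one_triple h4 h5 h6)

lemma delta_eval {A : Finset α} {S : Finset (Fin n)}
    (hout : ∀ e, e ∉ S → (A ∩ X e).card ≤ 1) :
    matDef (hypRho1 X) A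
      = ∑ e ∈ S, (((A ∩ X e).card : ℤ) - min ((A ∩ X e).card : ℤ) 1) := by
  rw [matDef_rho_eq]
  symm
  apply Finset.sum_subset (Finset.subset_univ S)
  intro e _ he
  have := hout e he
  omega

lemma exists_edge_of_delta {u v : α} (h : 0 < matDef (hypRho1 X) {u, v}) :
    ∃ l, u ∈ X l ∧ v ∈ X l := by
  by_contra hno
  push_neg at hno
  have h0 : matDef (hypRho1 X) {u, v} = 0 := by
    rw [delta_eval (S := (∅ : Finset (Fin n)))
      (fun e _ => inter_card_le_one_pair (fun hc => hno e hc.1 hc.2))]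
    simp
  omega

lemma delta_pair (hH2 : ∀ i j, i ≠ j → (X i ∩ X j).card ≤ 1) {u v : α} {j : Fin n}
    (huv : u ≠ v) (hu : u ∈ X j) (hv : v ∈ X j) :
    matDef (hypRho1 X) {u, v} = 1 := by
  rw [delta_eval (S := ({j} : Finset (Fin n))) ?hout]
  case hout =>
    intro e he
    simp only [Finset.mem_singleton] at he
    exact inter_card_le_one_pair (fun hc => he (edge_unique hH2 huv hu hv hc.1 hc.2))
  rw [Finset.sum_singleton]
  rw [Finset.inter_eq_left.mpr (pair_subset hu hv), Finset.card_pair huv]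
  norm_num

lemma delta_triple_in (hH2 : ∀ i j, i ≠ j → (X i ∩ X j).card ≤ 1) {a b c : α} {j : Fin n}
    (hab : a ≠ b) (hac : a ≠ c) (hbc : b ≠ c)
    (ha : a ∈ X j) (hb : b ∈ X j) (hc : c ∈ X j) :
    matDef (hypRho1 X) {a, b, c} = 2 := by
  rw [delta_eval (S := ({j} : Finset (Fin n))) ?hout]
  case hout =>
    intro e he
    simp only [Finset.mem_singleton] at he
    refine inter_card_le_one_triple ?_ ?_ ?_
    · exact fun hc' => he (edge_unique hH2 hab ha hb hc'.1 hc'.2)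
    · exact fun hc' => he (edge_unique hH2 hac ha hc hc'.1 hc'.2)
    · exact fun hc' => he (edge_unique hH2 hbc hb hc hc'.1 hc'.2)
  rw [Finset.sum_singleton]
  rw [Finset.inter_eq_left.mpr (triple_subset ha hb hc), card_triple hab hac hbc]
  norm_num

lemma delta_triple3 (hH2 : ∀ i j, i ≠ j → (X i ∩ X j).card ≤ 1) {a b c : α}
    {e1 e2 e3 : Fin n}
    (hab : a ≠ b) (hac : a ≠ c) (hbc : b ≠ c)
    (h12 : e1 ≠ e2) (h13 : e1 ≠ e3) (h23 : e2 ≠ e3)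
    (ha1 : a ∈ X e1) (hb1 : b ∈ X e1) (hc1 : c ∉ X e1)
    (ha2 : a ∈ X e2) (hc2 : c ∈ X e2) (hb2 : b ∉ X e2)
    (hb3 : b ∈ X e3) (hc3 : c ∈ X e3) (ha3 : a ∉ X e3) :
    matDef (hypRho1 X) {a, b, c} = 3 := by
  rw [delta_eval (S := ({e1, e2, e3} : Finset (Fin n))) ?hout]
  case hout =>
    intro e he
    simp only [Finset.mem_insert, Finset.mem_singleton, not_or] at he
    refine inter_card_le_one_triple ?_ ?_ ?_
    · exact fun hc' => he.1 (edge_unique hH2 hab ha1 hb1 hc'.1 hc'.2)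
    · exact fun hc' => he.2.1 (edge_unique hH2 hac ha2 hc2 hc'.1 hc'.2)
    · exact fun hc' => he.2.2 (edge_unique hH2 hbc hb3 hc3 hc'.1 hc'.2)
  rw [sum_triple _ h12 h13 h23]
  have i1 : ({a, b, c} : Finset α) ∩ X e1 = {a, b} := by
    ext x
    simp only [Finset.mem_inter, Finset.mem_insert, Finset.mem_singleton]
    constructor
    · rintro ⟨rfl | rfl | rfl, hx⟩
      · exact Or.inl rfl
      · exact Or.inr rfl
      · exact absurd hx hc1
    · rintro (rfl | rfl) <;> simp [ha1, hb1]
  have i2 : ({a, b, c} : Finset α) ∩ X e2 = {a, c} := by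
    ext x
    simp only [Finset.mem_inter, Finset.mem_insert, Finset.mem_singleton]
    constructor
    · rintro ⟨rfl | rfl | rfl, hx⟩
      · exact Or.inl rfl
      · exact absurd hx hb2
      · exact Or.inr rfl
    · rintro (rfl | rfl) <;> simp [ha2, hc2]
  have i3 : ({a, b, c} : Finset α) ∩ X e3 = {b, c} := by
    ext x
    simp only [Finset.mem_inter, Finset.mem_insert, Finset.mem_singleton]
    constructor
    · rintro ⟨rfl | rfl | rfl, hx⟩
      · exact absurd hx ha3
      · exact Or.inl rfl
      · exact Or.inr rfl
    · rintro (rfl | rfl) <;> simp [hb3, hc3]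
  rw [i1, i2, i3, Finset.card_pair hab, Finset.card_pair hac, Finset.card_pair hbc]
  norm_num

lemma delta_quad (hH2 : ∀ i j, i ≠ j → (X i ∩ X j).card ≤ 1) {p q u w : α}
    {f0 f1 f2 f3 : Fin n}
    (hpq : p ≠ q) (hpu : p ≠ u) (hpw : p ≠ w) (hqu : q ≠ u) (hqw : q ≠ w) (huw : u ≠ w)
    (h01 : f0 ≠ f1) (h02 : f0 ≠ f2) (h03 : f0 ≠ f3) (h12 : f1 ≠ f2) (h13 : f1 ≠ f3)
    (h23 : f2 ≠ f3)
    (hp0 : p ∈ X f0) (hq0 : q ∈ X f0) (hu0 : u ∈ X f0) (hw0 : w ∉ X f0)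
    (hp1 : p ∈ X f1) (hw1 : w ∈ X f1) (hq1 : q ∉ X f1) (hu1 : u ∉ X f1)
    (hq2 : q ∈ X f2) (hw2 : w ∈ X f2) (hp2 : p ∉ X f2) (hu2 : u ∉ X f2)
    (hu3 : u ∈ X f3) (hw3 : w ∈ X f3) (hp3 : p ∉ X f3) (hq3 : q ∉ X f3) :
    matDef (hypRho1 X) {p, q, u, w} = 5 := by
  rw [delta_eval (S := ({f0, f1, f2, f3} : Finset (Fin n))) ?hout]
  case hout =>
    intro e he
    simp only [Finset.mem_insert, Finset.mem_singleton, not_or] at he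
    refine inter_card_le_one_quad ?_ ?_ ?_ ?_ ?_ ?_
    · exact fun hc' => he.1 (edge_unique hH2 hpq hp0 hq0 hc'.1 hc'.2)
    · exact fun hc' => he.1 (edge_unique hH2 hpu hp0 hu0 hc'.1 hc'.2)
    · exact fun hc' => he.2.1 (edge_unique hH2 hpw hp1 hw1 hc'.1 hc'.2)
    · exact fun hc' => he.1 (edge_unique hH2 hqu hq0 hu0 hc'.1 hc'.2)
    · exact fun hc' => he.2.2.1 (edge_unique hH2 hqw hq2 hw2 hc'.1 hc'.2)
    · exact fun hc' => he.2.2.2 (edge_unique hH2 huw hu3 hw3 hc'.1 hc'.2)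
  rw [sum_quad _ h01 h02 h03 h12 h13 h23]
  have i0 : ({p, q, u, w} : Finset α) ∩ X f0 = {p, q, u} := by
    ext x
    simp only [Finset.mem_inter, Finset.mem_insert, Finset.mem_singleton]
    constructor
    · rintro ⟨rfl | rfl | rfl | rfl, hx⟩
      · exact Or.inl rfl
      · exact Or.inr (Or.inl rfl)
      · exact Or.inr (Or.inr rfl)
      · exact absurd hx hw0
    · rintro (rfl | rfl | rfl) <;> simp [hp0, hq0, hu0]
  have i1 : ({p, q, u, w} : Finset α) ∩ X f1 = {p, w} := by
    ext x
    simp only [Finset.mem_inter, Finset.mem_insert, Finset.mem_singleton]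
    constructor
    · rintro ⟨rfl | rfl | rfl | rfl, hx⟩
      · exact Or.inl rfl
      · exact absurd hx hq1
      · exact absurd hx hu1
      · exact Or.inr rfl
    · rintro (rfl | rfl) <;> simp [hp1, hw1]
  have i2 : ({p, q, u, w} : Finset α) ∩ X f2 = {q, w} := by
    ext x
    simp only [Finset.mem_inter, Finset.mem_insert, Finset.mem_singleton]
    constructor
    · rintro ⟨rfl | rfl | rfl | rfl, hx⟩
      · exact absurd hx hp2
      · exact Or.inl rfl
      · exact absurd hx hu2
      · exact Or.inr rfl
    · rintro (rfl | rfl) <;> simp [hq2, hw2]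
  have i3 : ({p, q, u, w} : Finset α) ∩ X f3 = {u, w} := by
    ext x
    simp only [Finset.mem_inter, Finset.mem_insert, Finset.mem_singleton]
    constructor
    · rintro ⟨rfl | rfl | rfl | rfl, hx⟩
      · exact absurd hx hp3
      · exact absurd hx hq3
      · exact Or.inl rfl
      · exact Or.inr rfl
    · rintro (rfl | rfl) <;> simp [hu3, hw3]
  rw [i0, i1, i2, i3, card_triple hpq hpu hqu, Finset.card_pair hpw, Finset.card_pair hqw,
    Finset.card_pair huw]
  norm_num

end Aux2

/-- pair deficiency -/
def dPair [DecidableEq α] (r : Finset α → ℤ) (u v : α) : ℤ := r {u} + r {v} - r {u, v}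

section Aux3
variable [DecidableEq α] {E : Finset α} {n : ℕ} {X : Fin n → Finset α} {k : ℕ}
  {M : Fin k → Finset α → ℤ}

lemma card_pair_le4 {a b : α} : ({a, b} : Finset α).card ≤ 4 := by
  have h1 := Finset.card_insert_le a ({b} : Finset α)
  have h2 : ({b} : Finset α).card = 1 := Finset.card_singleton b
  omega

lemma matDef_pair {r : Finset α → ℤ} {u v : α} (huv : u ≠ v) :
    matDef r {u, v} = dPair r u v := by
  unfold matDef dPair
  rw [Finset.sum_pair huv]

lemma dPair_nonneg {r : Finset α → ℤ} (h : IsMatroidRankOn E r) {u v : α}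
    (hu : u ∈ E) (hv : v ∈ E) (huv : u ≠ v) : 0 ≤ dPair r u v := by
  rw [← matDef_pair huv]
  exact matDef_nonneg h (pair_subset hu hv)

lemma dPair_comm {r : Finset α → ℤ} (u v : α) : dPair r u v = dPair r v u := by
  unfold dPair
  rw [Finset.pair_comm]
  ring

lemma dPair_pos_parallel {r : Finset α → ℤ} (h : IsMatroidRankOn E r) {u v : α}
    (hu : u ∈ E) (hv : v ∈ E) (huv : u ≠ v) (hd : 0 < dPair r u v) :
    r {u} = 1 ∧ r {v} = 1 ∧ r {u, v} = 1 := by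
  apply mr_deficit_pair h hu hv huv
  unfold dPair at hd
  omega

lemma matDef_ge_two {r : Finset α → ℤ} (h : IsMatroidRankOn E r) {x y z : α}
    (hx : x ∈ E) (hy : y ∈ E) (hz : z ∈ E) (hxy : x ≠ y) (hxz : x ≠ z) (hyz : y ≠ z) :
    dPair r x y + dPair r y z ≤ matDef r {x, y, z} := by
  have hsub := mr_submod h (A := {x, y}) (B := {y, z}) (pair_subset hx hy) (pair_subset hy hz)
  rw [pair_union_pair, pair_inter_pair hxy hxz] at hsub
  unfold matDef dPair
  rw [sum_triple _ hxy hxz hyz]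
  linarith

lemma sum_matDef (hM : ∀ i, IsMatroidRankOn E (M i))
    (hsmall : ∀ A : Finset α, A ⊆ E → A.card ≤ 4 → ∑ i, M i A = hypRho1 X A)
    {A : Finset α} (hA : A ⊆ E) (hcard : A.card ≤ 4) :
    ∑ i, matDef (M i) A = matDef (hypRho1 X) A := by
  unfold matDef
  rw [Finset.sum_sub_distrib, hsmall A hA hcard]
  congr 1
  rw [Finset.sum_comm]
  refine Finset.sum_congr rfl fun v hv => ?_
  exact hsmall {v} (Finset.singleton_subset_iff.mpr (hA hv)) (by simp)

lemma sum_dPair (hM : ∀ i, IsMatroidRankOn E (M i))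
    (hsmall : ∀ A : Finset α, A ⊆ E → A.card ≤ 4 → ∑ i, M i A = hypRho1 X A)
    {u v : α} (hu : u ∈ E) (hv : v ∈ E) (huv : u ≠ v) :
    ∑ i, dPair (M i) u v = matDef (hypRho1 X) {u, v} := by
  rw [← sum_matDef hM hsmall (pair_subset hu hv) card_pair_le4]
  exact Finset.sum_congr rfl fun i _ => (matDef_pair huv).symm


lemma wd (hM : ∀ i, IsMatroidRankOn E (M i))
    (hsmall : ∀ A : Finset α, A ⊆ E → A.card ≤ 4 → ∑ i, M i A = hypRho1 X A)
    (hXsub : ∀ i, X i ⊆ E)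
    (hH2 : ∀ i j, i ≠ j → (X i ∩ X j).card ≤ 1)
    {e : Fin n} {u v w : α} (huv : u ≠ v) (huw : u ≠ w) (hvw : v ≠ w)
    (hu : u ∈ X e) (hv : v ∈ X e) (hw : w ∈ X e) {i : Fin k}
    (hd : 0 < dPair (M i) u v) : 0 < dPair (M i) u w := by
  have huE : u ∈ E := hXsub e hu
  have hvE : v ∈ E := hXsub e hv
  have hwE : w ∈ E := hXsub e hw
  by_contra hcon
  push_neg at hcon
  -- sum of pair deficits
  have hsuw : ∑ i', dPair (M i') u w = 1 := by
    rw [sum_dPair hM hsmall huE hwE huw, delta_pair hH2 huw hu hw]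
  have hsvw : ∑ i', dPair (M i') v w = 1 := by
    rw [sum_dPair hM hsmall hvE hwE hvw, delta_pair hH2 hvw hv hw]
  obtain ⟨i2, hi2⟩ : ∃ i', 0 < dPair (M i') u w := by
    by_contra hno
    push_neg at hno
    have hle : ∑ i', dPair (M i') u w ≤ 0 :=
      Finset.sum_nonpos (fun j _ => hno j)
    omega
  have hi2i : i2 ≠ i := fun hne => by rw [hne] at hi2; omega
  obtain ⟨i3, hi3⟩ : ∃ i', 0 < dPair (M i') v w := by
    by_contra hno
    push_neg at hno
    have hle : ∑ i', dPair (M i') v w ≤ 0 :=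
      Finset.sum_nonpos (fun j _ => hno j)
    omega
  -- triple deficiency sum
  have htsum : ∑ i', matDef (M i') {u, v, w} = 2 := by
    rw [sum_matDef hM hsmall (triple_subset huE hvE hwE) card_triple_le,
      delta_triple_in hH2 huv huw hvw hu hv hw]
  have htE : ({u, v, w} : Finset α) ⊆ E := triple_subset huE hvE hwE
  have hnn : ∀ i', 0 ≤ matDef (M i') {u, v, w} := fun i' => matDef_nonneg (hM i') htE
  have hset1 : ({v, u, w} : Finset α) = {u, v, w} := by
    ext x
    simp only [Finset.mem_insert, Finset.mem_singleton]
    tauto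
  have hset2 : ({u, w, v} : Finset α) = {u, v, w} := by
    ext x
    simp only [Finset.mem_insert, Finset.mem_singleton]
    tauto
  -- three "middle" bounds, for any index
  have bmidv : ∀ i', dPair (M i') u v + dPair (M i') v w ≤ matDef (M i') {u, v, w} :=
    fun i' => matDef_ge_two (hM i') huE hvE hwE huv huw hvw
  have bmidu : ∀ i', dPair (M i') v u + dPair (M i') u w ≤ matDef (M i') {u, v, w} := by
    intro i'
    have := matDef_ge_two (hM i') hvE huE hwE (Ne.symm huv) hvw huw
    rwa [hset1] at this
  have bmidw : ∀ i', dPair (M i') u w + dPair (M i') w v ≤ matDef (M i') {u, v, w} := by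
    intro i'
    have := matDef_ge_two (hM i') huE hwE hvE huw huv (Ne.symm hvw)
    rwa [hset2] at this
  have hdnn : ∀ i' (x y : α), x ∈ E → y ∈ E → x ≠ y → 0 ≤ dPair (M i') x y :=
    fun i' x y hx hy hxy => dPair_nonneg (hM i') hx hy hxy
  by_cases h3i : i3 = i
  · -- matDef i ≥ 2, matDef i2 ≥ 1
    subst h3i
    have b1 : 2 ≤ matDef (M i3) {u, v, w} := by
      have := bmidv i3
      omega
    have b2 : 1 ≤ matDef (M i2) {u, v, w} := by
      have := bmidw i2
      have := hdnn i2 w v hwE hvE (Ne.symm hvw)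
      omega
    have hsub : ∑ i' ∈ ({i3, i2} : Finset (Fin k)), matDef (M i') {u, v, w}
        ≤ ∑ i', matDef (M i') {u, v, w} :=
      Finset.sum_le_sum_of_subset_of_nonneg (Finset.subset_univ _) (fun j _ _ => hnn j)
    rw [Finset.sum_pair (Ne.symm hi2i)] at hsub
    omega
  · by_cases h3i2 : i3 = i2
    · subst h3i2
      have b1 : 2 ≤ matDef (M i3) {u, v, w} := by
        have := bmidw i3
        have : 0 < dPair (M i3) w v := by rw [dPair_comm]; exact hi3
        have := bmidw i3
        omega
      have b2 : 1 ≤ matDef (M i) {u, v, w} := by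
        have := bmidv i
        have := hdnn i v w hvE hwE hvw
        omega
      have hsub : ∑ i' ∈ ({i3, i} : Finset (Fin k)), matDef (M i') {u, v, w}
          ≤ ∑ i', matDef (M i') {u, v, w} :=
        Finset.sum_le_sum_of_subset_of_nonneg (Finset.subset_univ _) (fun j _ _ => hnn j)
      rw [Finset.sum_pair hi2i] at hsub
      omega
    · have b1 : 1 ≤ matDef (M i) {u, v, w} := by
        have := bmidv i
        have := hdnn i v w hvE hwE hvw
        omega
      have b2 : 1 ≤ matDef (M i2) {u, v, w} := by
        have := bmidw i2
        have := hdnn i2 w v hwE hvE (Ne.symm hvw)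
        omega
      have b3 : 1 ≤ matDef (M i3) {u, v, w} := by
        have := bmidv i3
        have := hdnn i3 u v huE hvE huv
        omega
      have hsub : ∑ i' ∈ ({i, i2, i3} : Finset (Fin k)), matDef (M i') {u, v, w}
          ≤ ∑ i', matDef (M i') {u, v, w} :=
        Finset.sum_le_sum_of_subset_of_nonneg (Finset.subset_univ _) (fun j _ _ => hnn j)
      rw [sum_triple _ (Ne.symm hi2i) (fun hh => h3i hh.symm) (fun hh => h3i2 hh.symm)] at hsub
      omega

end Aux3

/-- `r` collapses the set `S` to a single parallel class of rank-1 elements. -/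
def GoodCol [DecidableEq α] (r : Finset α → ℤ) (S : Finset α) : Prop :=
  (∀ u ∈ S, r {u} = 1) ∧ ∀ u ∈ S, ∀ v ∈ S, u ≠ v → r {u, v} = 1

section Aux4
variable [DecidableEq α] {E : Finset α} {n : ℕ} {X : Fin n → Finset α} {k : ℕ}
  {M : Fin k → Finset α → ℤ}

lemma good_of_dpair (hM : ∀ i, IsMatroidRankOn E (M i))
    (hsmall : ∀ A : Finset α, A ⊆ E → A.card ≤ 4 → ∑ i, M i A = hypRho1 X A)
    (hXsub : ∀ i, X i ⊆ E)
    (hH2 : ∀ i j, i ≠ j → (X i ∩ X j).card ≤ 1)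
    {j : Fin n} {u v : α} {i : Fin k}
    (huv : u ≠ v) (hu : u ∈ X j) (hv : v ∈ X j) (hd : 0 < dPair (M i) u v) :
    GoodCol (M i) (X j) := by
  have key : ∀ x ∈ X j, ∀ y ∈ X j, x ≠ y → 0 < dPair (M i) x y := by
    have step1 : ∀ t ∈ X j, t ≠ u → 0 < dPair (M i) u t := by
      intro t ht htu
      by_cases htv : t = v
      · subst htv; exact hd
      · exact wd hM hsmall hXsub hH2 huv (Ne.symm htu) (Ne.symm htv) hu hv ht hd
    intro x hx y hy hxy
    by_cases hxu : x = u
    · subst hxu; exact step1 y hy (Ne.symm hxy)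
    · have hux : 0 < dPair (M i) u x := step1 x hx hxu
      have hxu' : 0 < dPair (M i) x u := by rw [dPair_comm]; exact hux
      by_cases hyu : y = u
      · subst hyu; exact hxu'
      · exact wd hM hsmall hXsub hH2 (fun h => hxu h) hxy (Ne.symm hyu) hx hu hy hxu'
  constructor
  · intro x hx
    by_cases hxu : x = u
    · subst hxu
      exact (dPair_pos_parallel (hM i) (hXsub j hu) (hXsub j hv) huv hd).1
    · exact (dPair_pos_parallel (hM i) (hXsub j hu) (hXsub j hx)
        (fun h => hxu h.symm) (key u hu x hx (fun h => hxu h.symm))).2.1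
  · intro x hx y hy hxy
    exact (dPair_pos_parallel (hM i) (hXsub j hx) (hXsub j hy) hxy (key x hx y hy hxy)).2.2

lemma good_unique (hM : ∀ i, IsMatroidRankOn E (M i))
    (hsmall : ∀ A : Finset α, A ⊆ E → A.card ≤ 4 → ∑ i, M i A = hypRho1 X A)
    (hXsub : ∀ i, X i ⊆ E)
    (hH2 : ∀ i j, i ≠ j → (X i ∩ X j).card ≤ 1)
    {j : Fin n} {u v : α} {i i' : Fin k}
    (huv : u ≠ v) (hu : u ∈ X j) (hv : v ∈ X j)
    (hgi : GoodCol (M i) (X j)) (hgi' : GoodCol (M i') (X j)) : i = i' := by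
  by_contra hne
  have huE : u ∈ E := hXsub j hu
  have hvE : v ∈ E := hXsub j hv
  have hsum : ∑ i'', dPair (M i'') u v = 1 := by
    rw [sum_dPair hM hsmall huE hvE huv, delta_pair hH2 huv hu hv]
  have d1 : dPair (M i) u v = 1 := by
    unfold dPair
    rw [hgi.1 u hu, hgi.1 v hv, hgi.2 u hu v hv huv]
    norm_num
  have d2 : dPair (M i') u v = 1 := by
    unfold dPair
    rw [hgi'.1 u hu, hgi'.1 v hv, hgi'.2 u hu v hv huv]
    norm_num
  have hnn : ∀ i'', 0 ≤ dPair (M i'') u v := fun i'' => dPair_nonneg (hM i'') huE hvE huv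
  have hsub : ∑ i'' ∈ ({i, i'} : Finset (Fin k)), dPair (M i'') u v
      ≤ ∑ i'', dPair (M i'') u v :=
    Finset.sum_le_sum_of_subset_of_nonneg (Finset.subset_univ _) (fun j' _ _ => hnn j')
  rw [Finset.sum_pair hne] at hsub
  omega

set_option maxHeartbeats 8000000 in
lemma master (hM : ∀ i, IsMatroidRankOn E (M i))
    (hsmall : ∀ A : Finset α, A ⊆ E → A.card ≤ 4 → ∑ i, M i A = hypRho1 X A)
    (hXsub : ∀ i, X i ⊆ E)
    (hH2 : ∀ i j, i ≠ j → (X i ∩ X j).card ≤ 1)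
    {p q u w : α} {f0 f1 f2 f3 : Fin n} {i : Fin k}
    (hpq : p ≠ q) (hpu : p ≠ u) (hpw : p ≠ w) (hqu : q ≠ u) (hqw : q ≠ w) (huw : u ≠ w)
    (h01 : f0 ≠ f1) (h02 : f0 ≠ f2) (h03 : f0 ≠ f3) (h12 : f1 ≠ f2) (h13 : f1 ≠ f3)
    (h23 : f2 ≠ f3)
    (hp0 : p ∈ X f0) (hq0 : q ∈ X f0) (hu0 : u ∈ X f0) (hw0 : w ∉ X f0)
    (hp1 : p ∈ X f1) (hw1 : w ∈ X f1) (hq1 : q ∉ X f1) (hu1 : u ∉ X f1)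
    (hq2 : q ∈ X f2) (hw2 : w ∈ X f2) (hp2 : p ∉ X f2) (hu2 : u ∉ X f2)
    (hu3 : u ∈ X f3) (hw3 : w ∈ X f3) (hp3 : p ∉ X f3) (hq3 : q ∉ X f3)
    (hsp : M i {p} = 1) (hsq : M i {q} = 1) (hsu : M i {u} = 1) (hsw : M i {w} = 1)
    (hppq : M i {p, q} = 1) (hppu : M i {p, u} = 1) (hppw : M i {p, w} = 1)
    (hpqu : M i {q, u} = 1) (hpqw : M i {q, w} = 1) (hpuw : M i {u, w} = 1) : False := by
  have hpE : p ∈ E := hXsub f0 hp0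
  have hqE : q ∈ E := hXsub f0 hq0
  have huE : u ∈ E := hXsub f0 hu0
  have hwE : w ∈ E := hXsub f1 hw1
  -- pair concentration: other matroids are independent on all six pairs
  have conc : ∀ (x y : α) (e : Fin n), x ∈ X e → y ∈ X e → x ≠ y →
      M i {x, y} = 1 → M i {x} = 1 → M i {y} = 1 →
      ∀ i', i' ≠ i → M i' {x, y} = M i' {x} + M i' {y} := by
    intro x y e he1 he2 hxy hpair hx1 hy1 i' hne
    have hxE : x ∈ E := hXsub e he1
    have hyE : y ∈ E := hXsub e he2
    have hsum : ∑ i'', dPair (M i'') x y = 1 := by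
      rw [sum_dPair hM hsmall hxE hyE hxy, delta_pair hH2 hxy he1 he2]
    have hdi : dPair (M i) x y = 1 := by unfold dPair; rw [hx1, hy1, hpair]; norm_num
    have hnn : ∀ i'', 0 ≤ dPair (M i'') x y := fun i'' => dPair_nonneg (hM i'') hxE hyE hxy
    have hsub : ∑ i'' ∈ ({i, i'} : Finset (Fin k)), dPair (M i'') x y
        ≤ ∑ i'', dPair (M i'') x y :=
      Finset.sum_le_sum_of_subset_of_nonneg (Finset.subset_univ _) (fun j' _ _ => hnn j')
    rw [Finset.sum_pair (Ne.symm hne)] at hsub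
    have : dPair (M i') x y = 0 := by have := hnn i'; omega
    unfold dPair at this
    omega
  -- triple extraction helper
  have extract : ∀ T : Finset α, T ⊆ E →
      (∑ i', matDef (M i') T = 3) → matDef (M i) T = 2 →
      ∃ i1, i1 ≠ i ∧ matDef (M i1) T = 1 := by
    intro T hTE hsumT hDiT
    have h0 : (∑ i' ∈ Finset.univ.erase i, matDef (M i') T) + matDef (M i) T
        = ∑ i', matDef (M i') T :=
      Finset.sum_erase_add _ _ (Finset.mem_univ i)
    obtain ⟨i1, hi1mem, hi1pos⟩ : ∃ i1 ∈ Finset.univ.erase i, 0 < matDef (M i1) T := by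
      by_contra hno
      push_neg at hno
      have hle : ∑ i' ∈ Finset.univ.erase i, matDef (M i') T ≤ 0 :=
        Finset.sum_nonpos (fun j' hj' => hno j' hj')
      omega
    have hle : matDef (M i1) T ≤ ∑ i' ∈ Finset.univ.erase i, matDef (M i') T :=
      Finset.single_le_sum (fun j' _ => matDef_nonneg (hM j') hTE) hi1mem
    exact ⟨i1, (Finset.mem_erase.mp hi1mem).1, by omega⟩
  -- special triple all-zero helper
  have allzero : ∀ T : Finset α, T ⊆ E →
      (∑ i', matDef (M i') T = 2) → matDef (M i) T = 2 →
      ∀ i', i' ≠ i → matDef (M i') T = 0 := by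
    intro T hTE hsumT hDiT i' hne
    have h0 : (∑ i'' ∈ Finset.univ.erase i, matDef (M i'') T) + matDef (M i) T
        = ∑ i'', matDef (M i'') T :=
      Finset.sum_erase_add _ _ (Finset.mem_univ i)
    have hle : matDef (M i') T ≤ ∑ i'' ∈ Finset.univ.erase i, matDef (M i'') T :=
      Finset.single_le_sum (fun j' _ => matDef_nonneg (hM j') hTE)
        (Finset.mem_erase.mpr ⟨hne, Finset.mem_univ i'⟩)
    have := matDef_nonneg (hM i') hTE
    omega
  -- rank-1 triples for matroid i
  have htr1 : M i {p, q, w} = 1 :=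
    (mr_parallel_trans (hM i) hpE hqE hwE hpq hpw hqw hsp hsq hsw hppq hpqw).2
  have htr2 : M i {p, u, w} = 1 :=
    (mr_parallel_trans (hM i) hpE huE hwE hpu hpw huw hsp hsu hsw hppu hpuw).2
  have htr3 : M i {q, u, w} = 1 :=
    (mr_parallel_trans (hM i) hqE huE hwE hqu hqw huw hsq hsu hsw hpqu hpuw).2
  have hperm0 : ({q, p, u} : Finset α) = {p, q, u} := by
    ext x
    simp only [Finset.mem_insert, Finset.mem_singleton]
    tauto
  have htr0 : M i {p, q, u} = 1 := by
    have := (mr_parallel_trans (hM i) hqE hpE huE (Ne.symm hpq) hqu hpu hsq hsp hsu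
      (by rw [Finset.pair_comm]; exact hppq) hppu).2
    rwa [hperm0] at this
  -- deficiencies for matroid i
  have hDT1 : matDef (M i) {p, q, w} = 2 := by
    unfold matDef; rw [sum_triple _ hpq hpw hqw, hsp, hsq, hsw, htr1]; norm_num
  have hDT2 : matDef (M i) {p, u, w} = 2 := by
    unfold matDef; rw [sum_triple _ hpu hpw huw, hsp, hsu, hsw, htr2]; norm_num
  have hDT3 : matDef (M i) {q, u, w} = 2 := by
    unfold matDef; rw [sum_triple _ hqu hqw huw, hsq, hsu, hsw, htr3]; norm_num
  have hDT0 : matDef (M i) {p, q, u} = 2 := by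
    unfold matDef; rw [sum_triple _ hpq hpu hqu, hsp, hsq, hsu, htr0]; norm_num
  -- hypergraph deficiency sums
  have hsT1 : ∑ i', matDef (M i') {p, q, w} = 3 := by
    rw [sum_matDef hM hsmall (triple_subset hpE hqE hwE) card_triple_le]
    exact delta_triple3 hH2 hpq hpw hqw h01 h02 h12 hp0 hq0 hw0 hp1 hw1 hq1 hq2 hw2 hp2
  have hsT2 : ∑ i', matDef (M i') {p, u, w} = 3 := by
    rw [sum_matDef hM hsmall (triple_subset hpE huE hwE) card_triple_le]
    exact delta_triple3 hH2 hpu hpw huw h01 h03 h13 hp0 hu0 hw0 hp1 hw1 hu1 hu3 hw3 hp3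
  have hsT3 : ∑ i', matDef (M i') {q, u, w} = 3 := by
    rw [sum_matDef hM hsmall (triple_subset hqE huE hwE) card_triple_le]
    exact delta_triple3 hH2 hqu hqw huw h02 h03 h23 hq0 hu0 hw0 hq2 hw2 hu2 hu3 hw3 hq3
  have hsT0 : ∑ i', matDef (M i') {p, q, u} = 2 := by
    rw [sum_matDef hM hsmall (triple_subset hpE hqE huE) card_triple_le]
    exact delta_triple_in hH2 hpq hpu hqu hp0 hq0 hu0
  -- extract the three U_{2,3} matroids
  obtain ⟨i1, hi1ne, hi1D⟩ := extract _ (triple_subset hpE hqE hwE) hsT1 hDT1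
  obtain ⟨i2, hi2ne, hi2D⟩ := extract _ (triple_subset hpE huE hwE) hsT2 hDT2
  obtain ⟨i3, hi3ne, hi3D⟩ := extract _ (triple_subset hqE huE hwE) hsT3 hDT3
  have hz := allzero _ (triple_subset hpE hqE huE) hsT0 hDT0
  have hu1' := mr_U23 (hM i1) hpE hqE hwE hpq hpw hqw
    (conc p q f0 hp0 hq0 hpq hppq hsp hsq i1 hi1ne)
    (conc p w f1 hp1 hw1 hpw hppw hsp hsw i1 hi1ne)
    (conc q w f2 hq2 hw2 hqw hpqw hsq hsw i1 hi1ne) hi1D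
  have hu2' := mr_U23 (hM i2) hpE huE hwE hpu hpw huw
    (conc p u f0 hp0 hu0 hpu hppu hsp hsu i2 hi2ne)
    (conc p w f1 hp1 hw1 hpw hppw hsp hsw i2 hi2ne)
    (conc u w f3 hu3 hw3 huw hpuw hsu hsw i2 hi2ne) hi2D
  have hu3' := mr_U23 (hM i3) hqE huE hwE hqu hqw huw
    (conc q u f0 hq0 hu0 hqu hpqu hsq hsu i3 hi3ne)
    (conc q w f2 hq2 hw2 hqw hpqw hsq hsw i3 hi3ne)
    (conc u w f3 hu3 hw3 huw hpuw hsu hsw i3 hi3ne) hi3D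
  -- the three indices are pairwise distinct
  have hne12 : i1 ≠ i2 := by
    intro heq
    subst heq
    have hz1 := hz i1 hi1ne
    have hr0 : M i1 {p, q, u} = 3 := by
      unfold matDef at hz1
      rw [sum_triple _ hpq hpu hqu, hu1'.1.1, hu1'.1.2.1, hu2'.1.2.1] at hz1
      omega
    exact mr_quadcontra (hM i1) hpE hqE huE hwE hpq hpu hpw hqu hqw huw
      (le_of_eq hu1'.2.1) (le_of_eq hu2'.2.1) (ge_of_eq hu1'.2.2.2.1) (by omega)
  have hne13 : i1 ≠ i3 := by
    intro heq
    subst heq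
    have hz1 := hz i1 hi1ne
    have hr0 : M i1 {p, q, u} = 3 := by
      unfold matDef at hz1
      rw [sum_triple _ hpq hpu hqu, hu1'.1.1, hu1'.1.2.1, hu3'.1.2.1] at hz1
      omega
    have hperm1 : ({q, p, w} : Finset α) = {p, q, w} := by
      ext x
      simp only [Finset.mem_insert, Finset.mem_singleton]
      tauto
    have h1 : M i1 {q, p, w} ≤ 2 := by rw [hperm1]; exact le_of_eq hu1'.2.1
    have h4 : 3 ≤ M i1 {q, p, u} := by rw [hperm0]; omega
    exact mr_quadcontra (hM i1) hqE hpE huE hwE (Ne.symm hpq) hqu hqw hpu hpw huw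
      h1 (le_of_eq hu3'.2.1) (ge_of_eq hu1'.2.2.2.2) h4
  have hne23 : i2 ≠ i3 := by
    intro heq
    subst heq
    have hz2 := hz i2 hi2ne
    have hr0 : M i2 {p, q, u} = 3 := by
      unfold matDef at hz2
      rw [sum_triple _ hpq hpu hqu, hu2'.1.1, hu3'.1.1, hu2'.1.2.1] at hz2
      omega
    have hperm2 : ({u, p, w} : Finset α) = {p, u, w} := by
      ext x
      simp only [Finset.mem_insert, Finset.mem_singleton]
      tauto
    have hperm3 : ({u, q, w} : Finset α) = {q, u, w} := by
      ext x
      simp only [Finset.mem_insert, Finset.mem_singleton]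
      tauto
    have hperm4 : ({u, p, q} : Finset α) = {p, q, u} := by
      ext x
      simp only [Finset.mem_insert, Finset.mem_singleton]
      tauto
    have h1 : M i2 {u, p, w} ≤ 2 := by rw [hperm2]; exact le_of_eq hu2'.2.1
    have h2 : M i2 {u, q, w} ≤ 2 := by rw [hperm3]; exact le_of_eq hu3'.2.1
    have h4 : 3 ≤ M i2 {u, p, q} := by rw [hperm4]; omega
    exact mr_quadcontra (hM i2) huE hpE hqE hwE (Ne.symm hpu) (Ne.symm hqu) huw hpq hpw hqw
      h1 h2 (ge_of_eq hu2'.2.2.2.2) h4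
  -- quad contradiction
  have hQE : ({p, q, u, w} : Finset α) ⊆ E := quad_subset hpE hqE huE hwE
  have hsQ : ∑ i', matDef (M i') {p, q, u, w} = 5 := by
    rw [sum_matDef hM hsmall hQE card_quad_le]
    exact delta_quad hH2 hpq hpu hpw hqu hqw huw h01 h02 h03 h12 h13 h23 hp0 hq0 hu0 hw0
      hp1 hw1 hq1 hu1 hq2 hw2 hp2 hu2 hu3 hw3 hp3 hq3
  have hrQ : M i {p, q, u, w} = 1 := by
    have hsub := mr_submod (hM i) (A := {p, q, u}) (B := {p, w})
      (triple_subset hpE hqE huE) (pair_subset hpE hwE)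
    have hU : ({p, q, u} : Finset α) ∪ {p, w} = {p, q, u, w} := by
      ext x
      simp only [Finset.mem_union, Finset.mem_insert, Finset.mem_singleton]
      tauto
    have hI : ({p, q, u} : Finset α) ∩ {p, w} = {p} := by
      ext x
      simp only [Finset.mem_inter, Finset.mem_insert, Finset.mem_singleton]
      constructor
      · rintro ⟨h1, rfl | rfl⟩
        · rfl
        · rcases h1 with h | h | h
          · exact absurd h.symm hpw
          · exact absurd h.symm hqw
          · exact absurd h.symm huw
      · rintro rfl
        exact ⟨Or.inl rfl, Or.inl rfl⟩
    rw [hU, hI] at hsub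
    have hmono : M i {p} ≤ M i {p, q, u, w} := by
      refine mr_mono (hM i) ?_ hQE
      intro x hx
      rw [Finset.mem_singleton] at hx
      rw [hx]
      exact Finset.mem_insert_self p _
    omega
  have hDiQ : matDef (M i) {p, q, u, w} = 3 := by
    unfold matDef
    rw [sum_quad _ hpq hpu hpw hqu hqw huw, hsp, hsq, hsu, hsw, hrQ]
    norm_num
  have hb1 : 1 ≤ matDef (M i1) {p, q, u, w} := by
    have := matDef_mono (hM i1) (show ({p,q,w} : Finset α) ⊆ {p,q,u,w} by
      intro x hx
      simp only [Finset.mem_insert, Finset.mem_singleton] at hx ⊢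
      tauto) hQE
    omega
  have hb2 : 1 ≤ matDef (M i2) {p, q, u, w} := by
    have := matDef_mono (hM i2) (show ({p,u,w} : Finset α) ⊆ {p,q,u,w} by
      intro x hx
      simp only [Finset.mem_insert, Finset.mem_singleton] at hx ⊢
      tauto) hQE
    omega
  have hb3' : 1 ≤ matDef (M i3) {p, q, u, w} := by
    have := matDef_mono (hM i3) (show ({q,u,w} : Finset α) ⊆ {p,q,u,w} by
      intro x hx
      simp only [Finset.mem_insert, Finset.mem_singleton] at hx ⊢
      tauto) hQE
    omega
  have hnnQ : ∀ i', 0 ≤ matDef (M i') {p, q, u, w} := fun i' => matDef_nonneg (hM i') hQE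
  have hsub : ∑ i' ∈ ({i, i1, i2, i3} : Finset (Fin k)), matDef (M i') {p, q, u, w}
      ≤ ∑ i', matDef (M i') {p, q, u, w} :=
    Finset.sum_le_sum_of_subset_of_nonneg (Finset.subset_univ _) (fun j' _ _ => hnnQ j')
  rw [sum_quad _ (Ne.symm hi1ne) (Ne.symm hi2ne) (Ne.symm hi3ne) hne12 hne13 hne23] at hsub
  omega

end Aux4

section Aux5
variable [DecidableEq α] {E : Finset α} {n : ℕ} {X : Fin n → Finset α} {k : ℕ}
  {M : Fin k → Finset α → ℤ}

lemma delta_pos_of_dpair_pos (hM : ∀ i, IsMatroidRankOn E (M i))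
    (hsmall : ∀ A : Finset α, A ⊆ E → A.card ≤ 4 → ∑ i, M i A = hypRho1 X A)
    {u v : α} (hu : u ∈ E) (hv : v ∈ E) (huv : u ≠ v) {i : Fin k}
    (hd : 0 < dPair (M i) u v) : ∃ l, u ∈ X l ∧ v ∈ X l := by
  apply exists_edge_of_delta
  have hsum := sum_dPair hM hsmall hu hv huv
  have hnn : ∀ i'', 0 ≤ dPair (M i'') u v := fun i'' => dPair_nonneg (hM i'') hu hv huv
  have hle : dPair (M i) u v ≤ ∑ i'', dPair (M i'') u v :=
    Finset.single_le_sum (fun j'' _ => hnn j'') (Finset.mem_univ i)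
  omega

lemma caseA (hM : ∀ i, IsMatroidRankOn E (M i))
    (hsmall : ∀ A : Finset α, A ⊆ E → A.card ≤ 4 → ∑ i, M i A = hypRho1 X A)
    (hXsub : ∀ i, X i ⊆ E)
    (hH2 : ∀ i j, i ≠ j → (X i ∩ X j).card ≤ 1)
    {j j' : Fin n} (hjj' : j ≠ j') {a b b' c : α} {i : Fin k}
    (ha : a ∈ X j) (ha' : a ∈ X j')
    (hGj : GoodCol (M i) (X j)) (hGj' : GoodCol (M i) (X j'))
    (hb : b ∈ X j) (hba : b ≠ a) (hc : c ∈ X j') (hca : c ≠ a)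
    (hb' : b' ∈ X j) (hb'a : b' ≠ a) (hb'b : b' ≠ b) : False := by
  have hcj : c ∉ X j := fun hcj =>
    hjj' (edge_unique hH2 (fun h => hca h.symm) ha hcj ha' hc).symm
  have hbj' : b ∉ X j' := fun hbj' =>
    hjj' (edge_unique hH2 (fun h => hba h.symm) ha' hbj' ha hb)
  have hb'j' : b' ∉ X j' := fun hh =>
    hjj' (edge_unique hH2 (fun h => hb'a h.symm) ha' hh ha hb')
  have hbc : b ≠ c := fun h => hcj (h ▸ hb)
  have hb'c : b' ≠ c := fun h => hcj (h ▸ hb')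
  have hsa : M i {a} = 1 := hGj.1 a ha
  have hsb : M i {b} = 1 := hGj.1 b hb
  have hsb' : M i {b'} = 1 := hGj.1 b' hb'
  have hsc : M i {c} = 1 := hGj'.1 c hc
  have hpab : M i {a, b} = 1 := hGj.2 a ha b hb (Ne.symm hba)
  have hpab' : M i {a, b'} = 1 := hGj.2 a ha b' hb' (Ne.symm hb'a)
  have hpbb' : M i {b, b'} = 1 := hGj.2 b hb b' hb' (Ne.symm hb'b)
  have hpac : M i {a, c} = 1 := hGj'.2 a ha' c hc (Ne.symm hca)
  have hpbc : M i {b, c} = 1 := by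
    refine (mr_parallel_trans (hM i) (hXsub j hb) (hXsub j ha) (hXsub j' hc)
      hba hbc (fun h => hca h.symm) hsb hsa hsc ?_ hpac).1
    rw [Finset.pair_comm]; exact hpab
  have hpb'c : M i {b', c} = 1 := by
    refine (mr_parallel_trans (hM i) (hXsub j hb') (hXsub j ha) (hXsub j' hc)
      hb'a hb'c (fun h => hca h.symm) hsb' hsa hsc ?_ hpac).1
    rw [Finset.pair_comm]; exact hpab'
  have hdbc : 0 < dPair (M i) b c := by
    unfold dPair; rw [hsb, hsc, hpbc]; norm_num
  have hdb'c : 0 < dPair (M i) b' c := by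
    unfold dPair; rw [hsb', hsc, hpb'c]; norm_num
  obtain ⟨l1, hbl1, hcl1⟩ :=
    delta_pos_of_dpair_pos hM hsmall (hXsub j hb) (hXsub j' hc) hbc hdbc
  obtain ⟨l2, hb'l2, hcl2⟩ :=
    delta_pos_of_dpair_pos hM hsmall (hXsub j hb') (hXsub j' hc) hb'c hdb'c
  have hl1j : l1 ≠ j := fun h => hcj (h ▸ hcl1)
  have hl1j' : l1 ≠ j' := fun h => hbj' (h ▸ hbl1)
  have hl2j : l2 ≠ j := fun h => hcj (h ▸ hcl2)
  have hl2j' : l2 ≠ j' := fun h => hb'j' (h ▸ hb'l2)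
  have hal1 : a ∉ X l1 := fun hh => hl1j (edge_unique hH2 (Ne.symm hba) ha hb hh hbl1)
  have hal2 : a ∉ X l2 := fun hh => hl2j (edge_unique hH2 (Ne.symm hb'a) ha hb' hh hb'l2)
  have hb'l1 : b' ∉ X l1 := fun hh => hl1j (edge_unique hH2 (Ne.symm hb'b) hb hb' hbl1 hh)
  have hbl2 : b ∉ X l2 := fun hh => hl2j (edge_unique hH2 hb'b hb' hb hb'l2 hh)
  have hl12 : l1 ≠ l2 := fun h => hb'l1 (by rw [h]; exact hb'l2)
  exact master hM hsmall hXsub hH2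
    (Ne.symm hba) (Ne.symm hb'a) (fun h => hca h.symm) (Ne.symm hb'b) hbc hb'c
    hjj' (Ne.symm hl1j) (Ne.symm hl2j) (Ne.symm hl1j') (Ne.symm hl2j') hl12
    ha hb hb' hcj
    ha' hc hbj' hb'j'
    hbl1 hcl1 hal1 hb'l1
    hb'l2 hcl2 hal2 hbl2
    hsa hsb hsb' hsc
    hpab hpab' hpac hpbb' hpbc hpb'c

lemma caseB (hM : ∀ i, IsMatroidRankOn E (M i))
    (hsmall : ∀ A : Finset α, A ⊆ E → A.card ≤ 4 → ∑ i, M i A = hypRho1 X A)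
    (hXsub : ∀ i, X i ⊆ E)
    (hH2 : ∀ i j, i ≠ j → (X i ∩ X j).card ≤ 1)
    (hH3 : ¬ ∃ (a b c : α) (i j l : Fin n),
      a ≠ b ∧ a ≠ c ∧ b ≠ c ∧ X i = {a, b} ∧ X j = {a, c} ∧ X l = {b, c})
    {j j' : Fin n} (hjj' : j ≠ j') {a b c : α} {i : Fin k}
    (ha : a ∈ X j) (ha' : a ∈ X j')
    (hGj : GoodCol (M i) (X j)) (hGj' : GoodCol (M i) (X j'))
    (hb : b ∈ X j) (hba : b ≠ a) (hc : c ∈ X j') (hca : c ≠ a)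
    (hsj : ∀ y ∈ X j, y = a ∨ y = b) (hsj' : ∀ y ∈ X j', y = a ∨ y = c) : False := by
  have hcj : c ∉ X j := fun hcj =>
    hjj' (edge_unique hH2 (fun h => hca h.symm) ha hcj ha' hc).symm
  have hbj' : b ∉ X j' := fun hbj' =>
    hjj' (edge_unique hH2 (fun h => hba h.symm) ha' hbj' ha hb)
  have hbc : b ≠ c := fun h => hcj (h ▸ hb)
  have hsa : M i {a} = 1 := hGj.1 a ha
  have hsb : M i {b} = 1 := hGj.1 b hb
  have hsc : M i {c} = 1 := hGj'.1 c hc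
  have hpab : M i {a, b} = 1 := hGj.2 a ha b hb (Ne.symm hba)
  have hpac : M i {a, c} = 1 := hGj'.2 a ha' c hc (Ne.symm hca)
  have hpbc : M i {b, c} = 1 := by
    refine (mr_parallel_trans (hM i) (hXsub j hb) (hXsub j ha) (hXsub j' hc)
      hba hbc (fun h => hca h.symm) hsb hsa hsc ?_ hpac).1
    rw [Finset.pair_comm]; exact hpab
  have hdbc : 0 < dPair (M i) b c := by
    unfold dPair; rw [hsb, hsc, hpbc]; norm_num
  obtain ⟨l, hbl, hcl⟩ :=
    delta_pos_of_dpair_pos hM hsmall (hXsub j hb) (hXsub j' hc) hbc hdbc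
  have hlj : l ≠ j := fun h => hcj (h ▸ hcl)
  have hlj' : l ≠ j' := fun h => hbj' (h ▸ hbl)
  have hal : a ∉ X l := fun hh => hlj (edge_unique hH2 (Ne.symm hba) ha hb hh hbl)
  by_cases hx : ∃ x ∈ X l, x ≠ b ∧ x ≠ c
  · obtain ⟨x, hxl, hxb, hxc⟩ := hx
    have hxa : x ≠ a := fun h => hal (h ▸ hxl)
    have hGl : GoodCol (M i) (X l) := good_of_dpair hM hsmall hXsub hH2 hbc hbl hcl hdbc
    have hsx : M i {x} = 1 := hGl.1 x hxl
    have hpbx : M i {b, x} = 1 := hGl.2 b hbl x hxl (Ne.symm hxb)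
    have hpcx : M i {c, x} = 1 := hGl.2 c hcl x hxl (Ne.symm hxc)
    have hpax : M i {a, x} = 1 :=
      (mr_parallel_trans (hM i) (hXsub j ha) (hXsub j hb) (hXsub l hxl)
        (Ne.symm hba) (Ne.symm hxa) (Ne.symm hxb) hsa hsb hsx hpab hpbx).1
    have hdax : 0 < dPair (M i) a x := by
      unfold dPair; rw [hsa, hsx, hpax]; norm_num
    obtain ⟨m, ham, hxm⟩ :=
      delta_pos_of_dpair_pos hM hsmall (hXsub j ha) (hXsub l hxl) (Ne.symm hxa) hdax
    have hxj : x ∉ X j := fun hh => by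
      rcases hsj x hh with h | h
      · exact hxa h
      · exact hxb h
    have hxj' : x ∉ X j' := fun hh => by
      rcases hsj' x hh with h | h
      · exact hxa h
      · exact hxc h
    have hmj : m ≠ j := fun h => hxj (h ▸ hxm)
    have hmj' : m ≠ j' := fun h => hxj' (h ▸ hxm)
    have hml : m ≠ l := fun h => hal (h ▸ ham)
    have hbm : b ∉ X m := fun hh => hmj (edge_unique hH2 (Ne.symm hba) ha hb ham hh)
    have hcm : c ∉ X m := fun hh => hmj' (edge_unique hH2 (Ne.symm hca) ha' hc ham hh)
    refine master hM hsmall hXsub hH2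
      hbc (fun h => hxb h.symm) hba (fun h => hxc h.symm) hca hxa
      hlj hlj' (Ne.symm hml) hjj' (Ne.symm hmj) (Ne.symm hmj')
      hbl hcl hxl hal
      hb ha hcj hxj
      hc ha' hbj' hxj'
      hxm ham hbm hcm
      hsb hsc hsx hsa
      hpbc hpbx ?_ hpcx ?_ ?_
    · rw [Finset.pair_comm]; exact hpab
    · rw [Finset.pair_comm]; exact hpac
    · rw [Finset.pair_comm]; exact hpax
  · push_neg at hx
    have hXl : X l = {b, c} := by
      apply Finset.Subset.antisymm
      · intro y hy
        simp only [Finset.mem_insert, Finset.mem_singleton]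
        by_cases h1 : y = b
        · exact Or.inl h1
        · exact Or.inr (hx y hy h1)
      · intro y hy
        simp only [Finset.mem_insert, Finset.mem_singleton] at hy
        rcases hy with rfl | rfl
        · exact hbl
        · exact hcl
    have hXj : X j = {a, b} := by
      apply Finset.Subset.antisymm
      · intro y hy
        simp only [Finset.mem_insert, Finset.mem_singleton]
        exact hsj y hy
      · intro y hy
        simp only [Finset.mem_insert, Finset.mem_singleton] at hy
        rcases hy with rfl | rfl
        · exact ha
        · exact hb
    have hXj' : X j' = {a, c} := by
      apply Finset.Subset.antisymm
      · intro y hy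
        simp only [Finset.mem_insert, Finset.mem_singleton]
        exact hsj' y hy
      · intro y hy
        simp only [Finset.mem_insert, Finset.mem_singleton] at hy
        rcases hy with rfl | rfl
        · exact ha'
        · exact hc
    exact hH3 ⟨a, b, c, j, j', l, Ne.symm hba, Ne.symm hca, hbc, hXj, hXj', hXl⟩

lemma prop2 (hM : ∀ i, IsMatroidRankOn E (M i))
    (hsmall : ∀ A : Finset α, A ⊆ E → A.card ≤ 4 → ∑ i, M i A = hypRho1 X A)
    (hXsub : ∀ i, X i ⊆ E)
    (hH2 : ∀ i j, i ≠ j → (X i ∩ X j).card ≤ 1)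
    (hH3 : ¬ ∃ (a b c : α) (i j l : Fin n),
      a ≠ b ∧ a ≠ c ∧ b ≠ c ∧ X i = {a, b} ∧ X j = {a, c} ∧ X l = {b, c})
    {j j' : Fin n} (hjj' : j ≠ j') {a : α}
    (ha : a ∈ X j) (ha' : a ∈ X j') {i : Fin k}
    (hGj : GoodCol (M i) (X j)) (hGj' : GoodCol (M i) (X j'))
    {b c : α} (hb : b ∈ X j) (hba : b ≠ a) (hc : c ∈ X j') (hca : c ≠ a) : False := by
  by_cases hA : ∃ b' ∈ X j, b' ≠ a ∧ b' ≠ b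
  · obtain ⟨b', hb', h1, h2⟩ := hA
    exact caseA hM hsmall hXsub hH2 hjj' ha ha' hGj hGj' hb hba hc hca hb' h1 h2
  · by_cases hA' : ∃ c' ∈ X j', c' ≠ a ∧ c' ≠ c
    · obtain ⟨c', hc', h1, h2⟩ := hA'
      exact caseA hM hsmall hXsub hH2 (Ne.symm hjj') ha' ha hGj' hGj hc hca hb hba hc' h1 h2
    · push_neg at hA hA'
      refine caseB hM hsmall hXsub hH2 hH3 hjj' ha ha' hGj hGj' hb hba hc hca ?_ ?_
      · intro y hy
        by_cases h1 : y = a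
        · exact Or.inl h1
        · exact Or.inr (hA y hy h1)
      · intro y hy
        by_cases h1 : y = a
        · exact Or.inl h1
        · exact Or.inr (hA' y hy h1)

end Aux5

section Key
variable [DecidableEq α] {E : Finset α} {n : ℕ} {X : Fin n → Finset α}

set_option maxHeartbeats 2000000 in
lemma keyColoring
    (hXsub : ∀ i, X i ⊆ E) (hXne : ∀ i, (X i).Nonempty) (hXinj : Function.Injective X)
    (hH2 : ∀ i j, i ≠ j → (X i ∩ X j).card ≤ 1)
    (hH3 : ¬ ∃ (a b c : α) (i j l : Fin n),
      a ≠ b ∧ a ≠ c ∧ b ≠ c ∧ X i = {a, b} ∧ X j = {a, c} ∧ X l = {b, c})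
    {s : ℤ}
    (hs1 : ∀ A ⊆ E, A.card ≤ 4 → hypRho1 X A ≤ s)
    (hs2 : s < hypRho1 X E)
    {k : ℕ} (hk : 0 < k)
    (hdec : KDecomposable k E (fun A => min (hypRho1 X A) s)) :
    ∃ c : Fin n → Fin k, ProperColoring (lineGraph X) c ∧
      (colorCount1 c : ℤ) + 2 * (colorCount2 c : ℤ) ≤ s := by
  classical
  obtain ⟨M, hM, hsum⟩ := hdec
  have hsmall : ∀ A : Finset α, A ⊆ E → A.card ≤ 4 → ∑ i, M i A = hypRho1 X A := by
    intro A hA hcA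
    have h : min (hypRho1 X A) s = ∑ i, M i A := hsum A hA
    rw [min_eq_left (hs1 A hA hcA)] at h
    exact h.symm
  haveI : Nonempty (Fin k) := ⟨⟨0, hk⟩⟩
  have goodEx : ∀ j : Fin n, (∃ u ∈ X j, ∃ v ∈ X j, u ≠ v) → ∃ i, GoodCol (M i) (X j) := by
    rintro j ⟨u, hu, v, hv, huv⟩
    have hsumd : ∑ i, dPair (M i) u v = 1 := by
      rw [sum_dPair hM hsmall (hXsub j hu) (hXsub j hv) huv, delta_pair hH2 huv hu hv]
    obtain ⟨i, hi⟩ : ∃ i, 0 < dPair (M i) u v := by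
      by_contra hno
      push_neg at hno
      have := Finset.sum_nonpos (fun i (_ : i ∈ Finset.univ) => hno i)
      omega
    exact ⟨i, good_of_dpair hM hsmall hXsub hH2 huv hu hv hi⟩
  let g : Fin n → Fin k := fun j =>
    if h : ∃ i, GoodCol (M i) (X j) then h.choose else Classical.arbitrary (Fin k)
  have hg : ∀ j, (∃ u ∈ X j, ∃ v ∈ X j, u ≠ v) → GoodCol (M (g j)) (X j) := by
    intro j hj
    have h := goodEx j hj
    show GoodCol (M (if h' : ∃ i, GoodCol (M i) (X j) then h'.choose
      else Classical.arbitrary (Fin k))) (X j)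
    rw [dif_pos h]
    exact h.choose_spec
  have guniq : ∀ (j : Fin n) (i : Fin k), (∃ u ∈ X j, ∃ v ∈ X j, u ≠ v) →
      GoodCol (M i) (X j) → i = g j := by
    rintro j i hj hGi
    obtain ⟨u, hu, v, hv, huv⟩ := hj
    exact good_unique hM hsmall hXsub hH2 huv hu hv hGi (hg j ⟨u, hu, v, hv, huv⟩)
  have singOf : ∀ j : Fin n, ¬(∃ u ∈ X j, ∃ v ∈ X j, u ≠ v) → ∀ a, a ∈ X j → X j = {a} := by
    intro j hns a haj
    apply Finset.Subset.antisymm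
    · intro y hy
      rw [Finset.mem_singleton]
      by_contra hya
      exact hns ⟨y, hy, a, haj, hya⟩
    · intro y hy
      rw [Finset.mem_singleton] at hy
      rw [hy]; exact haj
  have spareEx : ∀ (j : Fin n) (a : α), X j = {a} →
      ∃ i, M i {a} = 1 ∧ ∀ j', a ∈ X j' → (∃ y ∈ X j', y ≠ a) → g j' ≠ i := by
    intro j a hXj
    have haj : a ∈ X j := by rw [hXj]; exact Finset.mem_singleton_self a
    have haE : a ∈ E := hXsub j haj
    have hrho : hypRho1 X {a} = ((Finset.univ.filter (fun e : Fin n => a ∈ X e)).card : ℤ) := by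
      unfold hypRho1
      have hterm : ∀ e : Fin n, e ∈ Finset.univ →
          min ((({a} : Finset α) ∩ X e).card : ℤ) 1 = if a ∈ X e then 1 else 0 := by
        intro e _
        by_cases hv : a ∈ X e
        · rw [Finset.singleton_inter_of_mem hv]; simp [hv]
        · rw [Finset.singleton_inter_of_notMem hv]; simp [hv]
      rw [Finset.sum_congr rfl hterm, Finset.sum_boole]
    have hsuma : ∑ i, M i {a} = hypRho1 X {a} :=
      hsmall {a} (Finset.singleton_subset_iff.mpr haE) (by simp)
    have h01 : ∀ i, M i {a} = if M i {a} = 1 then 1 else 0 := by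
      intro i
      have h1 := mr_single_le (hM i) haE
      have h2 := mr_single_nonneg (hM i) haE
      split_ifs with h
      · exact h
      · omega
    have hcardA : ∑ i, M i {a}
        = ((Finset.univ.filter (fun i : Fin k => M i {a} = 1)).card : ℤ) := by
      rw [Finset.sum_congr rfl (fun i _ => h01 i), Finset.sum_boole]
    set A := Finset.univ.filter (fun i : Fin k => M i {a} = 1) with hAdef
    set D := Finset.univ.filter (fun e : Fin n => a ∈ X e) with hDdef
    set N := Finset.univ.filter
      (fun j' : Fin n => a ∈ X j' ∧ ∃ y ∈ X j', y ≠ a) with hNdef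
    have hAD : A.card = D.card := by
      have h : ((A.card : ℤ)) = (D.card : ℤ) := by rw [← hcardA, hsuma, hrho]
      exact_mod_cast h
    have hjD : j ∈ D := Finset.mem_filter.mpr ⟨Finset.mem_univ j, haj⟩
    have hjN : j ∉ N := by
      intro hmem
      obtain ⟨-, -, y, hy, hya⟩ := Finset.mem_filter.mp hmem
      rw [hXj, Finset.mem_singleton] at hy
      exact hya hy
    have hNsub : N ⊆ D.erase j := by
      intro e he
      have he' := Finset.mem_filter.mp he
      refine Finset.mem_erase.mpr ⟨?_, Finset.mem_filter.mpr ⟨Finset.mem_univ e, he'.2.1⟩⟩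
      rintro rfl
      exact hjN he
    have hNcard : N.card < D.card := by
      have h1 : N.card ≤ (D.erase j).card := Finset.card_le_card hNsub
      have h2 : (D.erase j).card < D.card := Finset.card_erase_lt_of_mem hjD
      omega
    have hBcard : (N.image g).card ≤ N.card := Finset.card_image_le
    obtain ⟨i, hiA, hiB⟩ : ∃ i ∈ A, i ∉ N.image g := by
      by_contra hno
      push_neg at hno
      have hsubAB : A ⊆ N.image g := fun i hi => hno i hi
      have := Finset.card_le_card hsubAB
      omega
    refine ⟨i, (Finset.mem_filter.mp hiA).2, ?_⟩
    intro j' haj' hyj' hgij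
    apply hiB
    exact Finset.mem_image.mpr
      ⟨j', Finset.mem_filter.mpr ⟨Finset.mem_univ _, haj', hyj'⟩, hgij⟩
  have choice : ∀ j : Fin n, ∃ i : Fin k,
      ((∃ u ∈ X j, ∃ v ∈ X j, u ≠ v) → GoodCol (M i) (X j)) ∧
      (∀ a : α, X j = {a} → M i {a} = 1 ∧
        ∀ j', a ∈ X j' → (∃ y ∈ X j', y ≠ a) → g j' ≠ i) := by
    intro j
    by_cases hns : ∃ u ∈ X j, ∃ v ∈ X j, u ≠ v
    · refine ⟨g j, fun _ => hg j hns, ?_⟩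
      intro a hXj
      exfalso
      obtain ⟨u, hu, v, hv, huv⟩ := hns
      rw [hXj, Finset.mem_singleton] at hu hv
      exact huv (hu.trans hv.symm)
    · obtain ⟨a, haj⟩ := hXne j
      have hXj : X j = {a} := singOf j hns a haj
      obtain ⟨i, hi1, hi2⟩ := spareEx j a hXj
      refine ⟨i, fun hns' => absurd hns' hns, ?_⟩
      intro a' hXj'
      have haa' : a = a' := by
        have h : ({a} : Finset α) = {a'} := by rw [← hXj, hXj']
        exact Finset.singleton_injective h
      rw [← haa']
      exact ⟨hi1, hi2⟩
  choose c hc using choice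
  have hrank1 : ∀ (p : Fin n) (u : α), u ∈ X p → M (c p) {u} = 1 := by
    intro p u hu
    by_cases hnsp : ∃ u' ∈ X p, ∃ v' ∈ X p, u' ≠ v'
    · exact ((hc p).1 hnsp).1 u hu
    · have hXp : X p = {u} := singOf p hnsp u hu
      exact ((hc p).2 u hXp).1
  have hproper : ProperColoring (lineGraph X) c := by
    intro p q hadj
    obtain ⟨hpq, x, hx⟩ := hadj
    have hxp : x ∈ X p := (Finset.mem_inter.mp hx).1
    have hxq : x ∈ X q := (Finset.mem_inter.mp hx).2
    intro heq
    by_cases hnsp : ∃ u ∈ X p, ∃ v ∈ X p, u ≠ v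
    · by_cases hnsq : ∃ u ∈ X q, ∃ v ∈ X q, u ≠ v
      · have hGp : GoodCol (M (c p)) (X p) := (hc p).1 hnsp
        have hGq : GoodCol (M (c p)) (X q) := by rw [heq]; exact (hc q).1 hnsq
        obtain ⟨u, hu, v, hv, huv⟩ := hnsp
        obtain ⟨b, hbp, hbx⟩ : ∃ b ∈ X p, b ≠ x := by
          by_cases h : u = x
          · exact ⟨v, hv, fun hh => huv (by rw [h, hh])⟩
          · exact ⟨u, hu, h⟩
        obtain ⟨u', hu', v', hv', huv'⟩ := hnsq
        obtain ⟨d, hdq, hdx⟩ : ∃ d ∈ X q, d ≠ x := by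
          by_cases h : u' = x
          · exact ⟨v', hv', fun hh => huv' (by rw [h, hh])⟩
          · exact ⟨u', hu', h⟩
        exact prop2 hM hsmall hXsub hH2 hH3 hpq hxp hxq hGp hGq hbp hbx hdq hdx
      · -- q singleton
        have hXq : X q = {x} := singOf q hnsq x hxq
        have hwit : ∃ y ∈ X p, y ≠ x := by
          obtain ⟨u, hu, v, hv, huv⟩ := hnsp
          by_cases h : u = x
          · exact ⟨v, hv, fun hh => huv (by rw [h, hh])⟩
          · exact ⟨u, hu, h⟩
        have havoid : g p ≠ c q := ((hc q).2 x hXq).2 p hxp hwit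
        have hcpg : c p = g p := guniq p (c p) hnsp ((hc p).1 hnsp)
        exact havoid (by rw [← hcpg, heq])
    · -- p singleton
      have hXp : X p = {x} := singOf p hnsp x hxp
      by_cases hnsq : ∃ u ∈ X q, ∃ v ∈ X q, u ≠ v
      · have hwit : ∃ y ∈ X q, y ≠ x := by
          obtain ⟨u, hu, v, hv, huv⟩ := hnsq
          by_cases h : u = x
          · exact ⟨v, hv, fun hh => huv (by rw [h, hh])⟩
          · exact ⟨u, hu, h⟩
        have havoid : g q ≠ c p := ((hc p).2 x hXp).2 q hxq hwit
        have hcqg : c q = g q := guniq q (c q) hnsq ((hc q).1 hnsq)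
        exact havoid (by rw [← hcqg, ← heq])
      · have hXq : X q = {x} := singOf q hnsq x hxq
        exact hpq (hXinj (hXp.trans hXq.symm))
  refine ⟨c, hproper, ?_⟩
  have hSE : ∑ i, M i E = s := by
    have h : min (hypRho1 X E) s = ∑ i, M i E := hsum E (Finset.Subset.refl E)
    rw [min_eq_right (le_of_lt hs2)] at h
    exact h.symm
  have hbound1 : ∀ i : Fin k, (∃ p, c p = i) → 1 ≤ M i E := by
    rintro i ⟨p, rfl⟩
    obtain ⟨u, hu⟩ := hXne p
    have h1 : M (c p) {u} = 1 := hrank1 p u hu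
    have h2 : M (c p) {u} ≤ M (c p) E :=
      mr_mono (hM (c p)) (Finset.singleton_subset_iff.mpr (hXsub p hu))
        (Finset.Subset.refl E)
    omega
  have hbound2 : ∀ i : Fin k,
      2 ≤ (Finset.univ.filter fun v => c v = i).card → 2 ≤ M i E := by
    intro i hcard
    obtain ⟨p, hp, q, hq, hpq⟩ := Finset.one_lt_card.mp hcard
    have hcp : c p = i := (Finset.mem_filter.mp hp).2
    have hcq : c q = i := (Finset.mem_filter.mp hq).2
    have hdisj : ∀ x, x ∈ X p → x ∉ X q := by
      intro x hx1 hx2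
      exact hproper p q ⟨hpq, ⟨x, Finset.mem_inter.mpr ⟨hx1, hx2⟩⟩⟩ (by rw [hcp, hcq])
    obtain ⟨u, hu⟩ := hXne p
    obtain ⟨v, hv⟩ := hXne q
    have huE : u ∈ E := hXsub p hu
    have hvE : v ∈ E := hXsub q hv
    have huv : u ≠ v := fun h => hdisj u hu (h ▸ hv)
    have h1 : M i {u} = 1 := by rw [← hcp]; exact hrank1 p u hu
    have h2 : M i {v} = 1 := by rw [← hcq]; exact hrank1 q v hv
    have hpair2 : 2 ≤ M i {u, v} := by
      by_contra hne2
      push_neg at hne2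
      have hd : 0 < dPair (M i) u v := by
        have hge : M i {u} ≤ M i {u, v} :=
          mr_mono (hM i) (by simp [Finset.insert_subset_iff]) (pair_subset huE hvE)
        have hnn := dPair_nonneg (hM i) huE hvE huv
        unfold dPair at hnn ⊢
        omega
      obtain ⟨l, hul, hvl⟩ := delta_pos_of_dpair_pos hM hsmall huE hvE huv hd
      have hGl : GoodCol (M i) (X l) := good_of_dpair hM hsmall hXsub hH2 huv hul hvl hd
      have hlns : ∃ u' ∈ X l, ∃ v' ∈ X l, u' ≠ v' := ⟨u, hul, v, hvl, huv⟩
      have hgl : i = g l := guniq l i hlns hGl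
      have hclg : c l = g l := guniq l (c l) hlns ((hc l).1 hlns)
      have hlp : l ≠ p := fun h => hdisj v (h ▸ hvl) hv
      exact hproper l p ⟨hlp, ⟨u, Finset.mem_inter.mpr ⟨hul, hu⟩⟩⟩
        (by rw [hclg, ← hgl, hcp])
    have hle : M i {u, v} ≤ M i E :=
      mr_mono (hM i) (pair_subset huE hvE) (Finset.Subset.refl E)
    omega
  set F1 := Finset.univ.filter
    (fun i : Fin k => (Finset.univ.filter fun v => c v = i).card = 1) with hF1def
  set F2 := Finset.univ.filter
    (fun i : Fin k => 2 ≤ (Finset.univ.filter fun v => c v = i).card) with hF2def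
  have hdisjF : Disjoint F1 F2 := by
    rw [Finset.disjoint_left]
    intro i h1 h2
    have h1' := (Finset.mem_filter.mp h1).2
    have h2' := (Finset.mem_filter.mp h2).2
    omega
  have hsubF : ∑ i ∈ F1 ∪ F2, M i E ≤ ∑ i, M i E :=
    Finset.sum_le_sum_of_subset_of_nonneg (Finset.subset_univ _)
      (fun i _ _ => mr_nonneg (hM i) (Finset.Subset.refl E))
  rw [Finset.sum_union hdisjF] at hsubF
  have hF1b : (F1.card : ℤ) ≤ ∑ i ∈ F1, M i E := by
    have hle : ∀ i ∈ F1, (1 : ℤ) ≤ M i E := by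
      intro i hi
      have hi' := (Finset.mem_filter.mp hi).2
      have hpos : 0 < (Finset.univ.filter fun v => c v = i).card := by omega
      obtain ⟨p, hp⟩ := Finset.card_pos.mp hpos
      exact hbound1 i ⟨p, (Finset.mem_filter.mp hp).2⟩
    calc (F1.card : ℤ) = ∑ _i ∈ F1, (1 : ℤ) := by
          rw [Finset.sum_const, nsmul_eq_mul, mul_one]
      _ ≤ ∑ i ∈ F1, M i E := Finset.sum_le_sum hle
  have hF2b : 2 * (F2.card : ℤ) ≤ ∑ i ∈ F2, M i E := by
    have hle : ∀ i ∈ F2, (2 : ℤ) ≤ M i E := by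
      intro i hi
      exact hbound2 i (Finset.mem_filter.mp hi).2
    calc 2 * (F2.card : ℤ) = ∑ _i ∈ F2, (2 : ℤ) := by
          rw [Finset.sum_const, nsmul_eq_mul]
          ring
      _ ≤ ∑ i ∈ F2, M i E := Finset.sum_le_sum hle
  have hcc1 : (colorCount1 c : ℤ) = (F1.card : ℤ) := rfl
  have hcc2 : (colorCount2 c : ℤ) = (F2.card : ℤ) := rfl
  rw [hcc1, hcc2]
  omega

end Key


theorem stmt6 [DecidableEq α] {n : ℕ} (E : Finset α)
    (X : Fin n → Finset α)
    (hXsub : ∀ i, X i ⊆ E) (hXne : ∀ i, (X i).Nonempty)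
    (hXinj : Function.Injective X)
    (hH2 : ∀ i j, i ≠ j → (X i ∩ X j).card ≤ 1)
    (hH3 : ¬ ∃ (a b c : α) (i j l : Fin n),
      a ≠ b ∧ a ≠ c ∧ b ≠ c ∧ X i = {a, b} ∧ X j = {a, c} ∧ X l = {b, c})
    (s : ℤ)
    (hs1 : ∀ A ⊆ E, A.card ≤ 4 → hypRho1 X A ≤ s)
    (hs2 : s < hypRho1 X E) :
    (∀ k : ℕ, 0 < k →
      KDecomposable k E (fun A => min (hypRho1 X A) s) →
      ∃ c : Fin n → Fin k, ProperColoring (lineGraph X) c ∧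
        (colorCount1 c : ℤ) + 2 * (colorCount2 c : ℤ) ≤ s) ∧
    (∀ χ : ℕ,
      IsLeast {m : ℕ | 0 < m ∧
        ∃ c : Fin n → Fin m, ProperColoring (lineGraph X) c} χ →
      s < (χ : ℤ) → ∀ k : ℕ, 0 < k →
        ¬ KDecomposable k E (fun A => min (hypRho1 X A) s)) := by
  constructor
  · intro k hk hdec
    exact keyColoring hXsub hXne hXinj hH2 hH3 hs1 hs2 hk hdec
  · intro χ hleast hsχ k hk hdec
    obtain ⟨c, hprop, hcount⟩ := keyColoring hXsub hXne hXinj hH2 hH3 hs1 hs2 hk hdec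
    have hn : 0 < n := by
      by_contra h
      push_neg at h
      have hn0 : n = 0 := by omega
      subst hn0
      have h1 : hypRho1 X E = 0 := by simp [hypRho1]
      have h2 := hs1 ∅ (Finset.empty_subset E) (by simp)
      have h3 : hypRho1 X ∅ = 0 := by simp [hypRho1]
      omega
    classical
    set U := Finset.univ.image c with hUdef
    have hUne : U.Nonempty :=
      ⟨c ⟨0, hn⟩, Finset.mem_image_of_mem c (Finset.mem_univ _)⟩
    set F1 := Finset.univ.filter
      (fun i : Fin k => (Finset.univ.filter fun v => c v = i).card = 1) with hF1def
    set F2 := Finset.univ.filter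
      (fun i : Fin k => 2 ≤ (Finset.univ.filter fun v => c v = i).card) with hF2def
    have hdisjF : Disjoint F1 F2 := by
      rw [Finset.disjoint_left]
      intro i h1 h2
      have h1' := (Finset.mem_filter.mp h1).2
      have h2' := (Finset.mem_filter.mp h2).2
      omega
    have hUeq : U = F1 ∪ F2 := by
      ext i
      simp only [hUdef, hF1def, hF2def, Finset.mem_union, Finset.mem_image,
        Finset.mem_filter, Finset.mem_univ, true_and]
      constructor
      · rintro ⟨p, -, rfl⟩
        have hpos : 0 < (Finset.univ.filter fun v => c v = c p).card :=
          Finset.card_pos.mpr ⟨p, Finset.mem_filter.mpr ⟨Finset.mem_univ p, rfl⟩⟩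
        omega
      · rintro (h | h)
        · have hpos : 0 < (Finset.univ.filter fun v => c v = i).card := by omega
          obtain ⟨p, hp⟩ := Finset.card_pos.mp hpos
          exact ⟨p, (Finset.mem_filter.mp hp).2⟩
        · have hpos : 0 < (Finset.univ.filter fun v => c v = i).card := by omega
          obtain ⟨p, hp⟩ := Finset.card_pos.mp hpos
          exact ⟨p, (Finset.mem_filter.mp hp).2⟩
    have hUcard : (U.card : ℤ) ≤ s := by
      rw [hUeq, Finset.card_union_of_disjoint hdisjF]
      have hcc1 : (colorCount1 c : ℤ) = (F1.card : ℤ) := rfl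
      have hcc2 : (colorCount2 c : ℤ) = (F2.card : ℤ) := rfl
      rw [hcc1, hcc2] at hcount
      push_cast
      omega
    let e := U.equivFin
    let c' : Fin n → Fin U.card := fun p =>
      e ⟨c p, Finset.mem_image_of_mem c (Finset.mem_univ p)⟩
    have hprop' : ProperColoring (lineGraph X) c' := by
      intro p q hadj heq
      apply hprop p q hadj
      have h := e.injective heq
      exact congrArg Subtype.val h
    have hmem : U.card ∈ {m : ℕ | 0 < m ∧
        ∃ c0 : Fin n → Fin m, ProperColoring (lineGraph X) c0} :=
      ⟨Finset.card_pos.mpr hUne, c', hprop'⟩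
    have hχle : χ ≤ U.card := hleast.2 hmem
    have hcast : (χ : ℤ) ≤ (U.card : ℤ) := by exact_mod_cast hχle
    omega
end
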